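/- arXiv:2011.10820 — 9 statements merged into one kernel-verified Lean document; each statement's English description precedes it below -/
import Mathlib

section
/- Splitting the cycles: Let α be a finite type with decidable equality and let A be a subset of α. Let U be the set of permutations τ of α such that any two elements of A lying in the same cycle of τ coincide (i.e. for all a, b ∈ A, if τ.SameCycle a b then a = b), and let S_A be the set of permutations of α fixing every point outside A. Then the multiplication map U × S_A → Perm α sending (τ, σ) to τ * σ (composition, τ after σ) is a bijection. -/
open Equiv Equiv.Perm

set_option linter.unusedSectionVars false



section helpers
variable {α : Type*} [Fintype α] [DecidableEq α] {A : Set α}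

/-- If two permutations agree off `A`, their powers agree along orbits avoiding `A`. -/
private lemma stc_agree_pow {π τ : Perm α} (h : ∀ x ∉ A, π x = τ x) :
    ∀ (n : ℕ) (y : α), (∀ i < n, (τ ^ i) y ∉ A) → (π ^ n) y = (τ ^ n) y := by
  intro n
  induction n with
  | zero => simp
  | succ n ih =>
    intro y hy
    have h1 : (π ^ n) y = (τ ^ n) y := ih y (fun i hi => hy i (Nat.lt_succ_of_lt hi))
    calc (π ^ (n+1)) y = π ((π ^ n) y) := by rw [pow_succ', Equiv.Perm.mul_apply]
    _ = π ((τ ^ n) y) := by rw [h1]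
    _ = τ ((τ ^ n) y) := h _ (hy n (Nat.lt_succ_self n))
    _ = (τ ^ (n+1)) y := by rw [pow_succ', Equiv.Perm.mul_apply]

private lemma stc_mem {σ : Perm α} (hσ : ∀ x, x ∉ A → σ x = x) {a : α} (ha : a ∈ A) :
    σ a ∈ A := by
  by_contra h
  have h2 : σ a = a := σ.injective (hσ (σ a) h)
  exact h (by rw [h2]; exact ha)

private lemma stc_inv_mem {σ : Perm α} (hσ : ∀ x, x ∉ A → σ x = x) {a : α} (ha : a ∈ A) :
    σ⁻¹ a ∈ A := by
  by_contra h
  have h2 : a = σ⁻¹ a := by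
    conv_lhs => rw [← (by simp : σ (σ⁻¹ a) = a), hσ _ h]
  exact h (h2 ▸ ha)

/-- Core characterization: for `π = τ * σ`, `σ a` is the first return of `a`'s `π`-orbit to `A`. -/
private lemma stc_first_return {τ σ : Perm α}
    (hτ : ∀ a ∈ A, ∀ b ∈ A, τ.SameCycle a b → a = b)
    (hσ : ∀ x, x ∉ A → σ x = x) {a : α} (ha : a ∈ A) :
    ∃ k, 0 < k ∧ ((τ * σ) ^ k) a = σ a ∧ σ a ∈ A ∧
      ∀ j, 0 < j → j < k → ((τ * σ) ^ j) a ∉ A := by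
  classical
  set π := τ * σ with hπ
  set y := σ a with hy
  have hyA : y ∈ A := stc_mem hσ ha
  have hex : ∃ m, 0 < m ∧ (τ ^ m) y = y :=
    ⟨orderOf τ, orderOf_pos τ, by rw [pow_orderOf_eq_one]; rfl⟩
  set m := Nat.find hex with hm
  obtain ⟨hmpos, hmy⟩ := Nat.find_spec hex
  have hint : ∀ i, 0 < i → i < m → (τ ^ i) y ∉ A := by
    intro i hi him hiA
    have hsc : τ.SameCycle y ((τ ^ i) y) := ⟨(i : ℤ), by rw [zpow_natCast]⟩
    have := hτ y hyA _ hiA hsc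
    exact Nat.find_min hex him ⟨hi, this.symm⟩
  have hagree : ∀ x ∉ A, π x = τ x := by
    intro x hx
    simp [hπ, Equiv.Perm.mul_apply, hσ x hx]
  have key : ∀ j, 0 < j → j ≤ m → (π ^ j) a = (τ ^ j) y := by
    intro j hj hjm
    obtain ⟨j, rfl⟩ : ∃ j', j = j' + 1 := ⟨j - 1, by omega⟩
    have h1 : (π ^ (j+1)) a = (π ^ j) (π a) := by
      rw [pow_succ, Equiv.Perm.mul_apply]
    have h2 : π a = τ y := by simp [hπ, Equiv.Perm.mul_apply, hy]
    have h3 : (π ^ j) (τ y) = (τ ^ j) (τ y) := by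
      apply stc_agree_pow hagree
      intro i hi
      have : (τ ^ i) (τ y) = (τ ^ (i+1)) y := by
        rw [pow_succ, Equiv.Perm.mul_apply]
      rw [this]
      exact hint (i+1) (Nat.succ_pos i) (by omega)
    have h4 : (τ ^ j) (τ y) = (τ ^ (j+1)) y := by
      rw [pow_succ, Equiv.Perm.mul_apply]
    rw [h1, h2, h3, h4]
  refine ⟨m, hmpos, ?_, hyA, ?_⟩
  · rw [key m hmpos le_rfl, hmy]
  · intro j hj hjm h
    exact hint j hj hjm (by rwa [← key j hj (le_of_lt hjm)])
end helpers
section helpers2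
variable {α : Type*} [Fintype α] [DecidableEq α] {A : Set α}

/-- If `σ` is the first-return map of `π` to `A`, then `π * σ⁻¹` has at most one `A`-point
per cycle. -/
private lemma stc_cycle_cond {π σ : Perm α} (hσ : ∀ x, x ∉ A → σ x = x)
    (hfr : ∀ a ∈ A, ∃ k, 0 < k ∧ (π ^ k) a = σ a ∧ ∀ j, 0 < j → j < k → (π ^ j) a ∉ A) :
    ∀ a ∈ A, ∀ b ∈ A, (π * σ⁻¹).SameCycle a b → a = b := by
  classical
  intro a ha b hb hsc
  set τ := π * σ⁻¹ with hτdef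
  obtain ⟨n, -, hn⟩ := hsc.exists_pow_eq'
  set c := σ⁻¹ a with hc
  have hcA : c ∈ A := stc_inv_mem hσ ha
  obtain ⟨k, hk, hka, hkmin⟩ := hfr c hcA
  have hsa : σ c = a := by rw [hc, (by simp : σ (σ⁻¹ a) = a)]
  have hσinv : ∀ x ∉ A, σ⁻¹ x = x := by
    intro x hx
    rw [Equiv.Perm.inv_eq_iff_eq, hσ x hx]
  have hagree : ∀ x ∉ A, τ x = π x := by
    intro x hx
    simp [hτdef, Equiv.Perm.mul_apply, hσinv x hx]
  -- τ^j a = π^j c for 0 < j ≤ k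
  have key : ∀ j, 0 < j → j ≤ k → (τ ^ j) a = (π ^ j) c := by
    intro j hj hjk
    obtain ⟨j, rfl⟩ : ∃ j', j = j' + 1 := ⟨j - 1, by omega⟩
    have h1 : (τ ^ (j+1)) a = (τ ^ j) (τ a) := by rw [pow_succ, Equiv.Perm.mul_apply]
    have h2 : τ a = π c := by simp [hτdef, Equiv.Perm.mul_apply, hc]
    have h3 : (τ ^ j) (π c) = (π ^ j) (π c) := by
      apply stc_agree_pow hagree
      intro i hi
      have : (π ^ i) (π c) = (π ^ (i+1)) c := by rw [pow_succ, Equiv.Perm.mul_apply]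
      rw [this]
      exact hkmin (i+1) (Nat.succ_pos i) (by omega)
    have h4 : (π ^ j) (π c) = (π ^ (j+1)) c := by rw [pow_succ, Equiv.Perm.mul_apply]
    rw [h1, h2, h3, h4]
  have hper : (τ ^ k) a = a := by rw [key k hk le_rfl, hka, hsa]
  have hmul : ∀ q, (τ ^ (k * q)) a = a := by
    intro q
    induction q with
    | zero => simp
    | succ q ih =>
      have h5 : k * (q + 1) = k * q + k := by ring
      rw [h5, pow_add, Equiv.Perm.mul_apply, hper, ih]
  have hmod : (τ ^ n) a = (τ ^ (n % k)) a := by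
    conv_lhs => rw [← Nat.mod_add_div n k, pow_add, Equiv.Perm.mul_apply, hmul (n / k)]
  rcases Nat.eq_zero_or_pos (n % k) with h0 | h0
  · rw [← hn, hmod, h0, pow_zero]; simp
  · exfalso
    have hb' : (τ ^ (n % k)) a ∈ A := by rw [← hmod, hn]; exact hb
    rw [key _ h0 (le_of_lt (Nat.mod_lt n hk))] at hb'
    exact hkmin _ h0 (Nat.mod_lt n hk) hb'
end helpers2

/-- **Splitting the cycles.**  Let `A` be a subset of a finite type `α`.  Let `U` be the set of
permutations `τ` of `α` each of whose cycles contains at most one element of `A` (i.e. any two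
elements of `A` in the same cycle of `τ` coincide), and let `S_A` be the set of permutations
fixing every point outside `A`.  Then the multiplication map `U × S_A → Perm α`,
`(τ, σ) ↦ τ * σ`, is a bijection. -/
theorem splitting_the_cycles {α : Type*} [Fintype α] [DecidableEq α] (A : Set α) :
    Function.Bijective
      (fun p : {τ : Equiv.Perm α // ∀ a ∈ A, ∀ b ∈ A, τ.SameCycle a b → a = b} ×
               {σ : Equiv.Perm α // ∀ x, x ∉ A → σ x = x} =>
        (p.1 : Equiv.Perm α) * (p.2 : Equiv.Perm α)) := by
  classical
  constructor
  · -- injectivity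
    rintro ⟨⟨τ₁, hτ₁⟩, ⟨σ₁, hσ₁⟩⟩ ⟨⟨τ₂, hτ₂⟩, ⟨σ₂, hσ₂⟩⟩ h
    simp only at h
    have hσ : σ₁ = σ₂ := by
      ext x
      rcases Classical.em (x ∈ A) with hx | hx
      · obtain ⟨k₁, hk₁, he₁, hA₁, hmin₁⟩ := stc_first_return hτ₁ hσ₁ hx
        obtain ⟨k₂, hk₂, he₂, hA₂, hmin₂⟩ := stc_first_return hτ₂ hσ₂ hx
        rw [h] at he₁ hmin₁
        have hkk : k₁ = k₂ := by
          by_contra hne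
          rcases Nat.lt_or_ge k₁ k₂ with hlt | hge
          · exact hmin₂ k₁ hk₁ hlt (he₁ ▸ hA₁)
          · exact hmin₁ k₂ hk₂ (lt_of_le_of_ne hge fun h' => hne h'.symm) (he₂ ▸ hA₂)
        rw [← he₁, ← he₂, hkk]
      · rw [hσ₁ x hx, hσ₂ x hx]
    have hτ : τ₁ = τ₂ := by
      rw [hσ] at h
      exact mul_right_cancel h
    simp [Prod.ext_iff, Subtype.ext_iff, hσ, hτ]
  · -- surjectivity
    intro π
    have hex : ∀ a, a ∈ A → ∃ k, 0 < k ∧ (π ^ k) a ∈ A := fun a ha =>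
      ⟨orderOf π, orderOf_pos π, by rw [pow_orderOf_eq_one]; simpa using ha⟩
    let f : α → α := fun x => if hx : x ∈ A then (π ^ Nat.find (hex x hx)) x else x
    have hfA : ∀ x (hx : x ∈ A), f x = (π ^ Nat.find (hex x hx)) x := fun x hx => dif_pos hx
    have hfN : ∀ x, x ∉ A → f x = x := fun x hx => dif_neg hx
    have hfinj : Function.Injective f := by
      have key : ∀ x (hx : x ∈ A) y (hy : y ∈ A),
          Nat.find (hex x hx) ≤ Nat.find (hex y hy) →
          (π ^ Nat.find (hex x hx)) x = (π ^ Nat.find (hex y hy)) y → x = y := by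
        intro x hx y hy hle heq
        set kx := Nat.find (hex x hx) with hkx
        set ky := Nat.find (hex y hy) with hky
        have hd : ky = kx + (ky - kx) := by omega
        have hsplit : (π ^ ky) y = (π ^ kx) ((π ^ (ky - kx)) y) := by
          conv_lhs => rw [hd]
          rw [pow_add, Equiv.Perm.mul_apply]
        have hx2 : x = (π ^ (ky - kx)) y := (π ^ kx).injective (heq.trans hsplit)
        rcases Nat.eq_zero_or_pos (ky - kx) with h0 | h0
        · rw [h0] at hx2; simpa using hx2
        · exfalso
          have hkxpos : 0 < kx := (Nat.find_spec (hex x hx)).1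
          have hlt : ky - kx < ky := by omega
          exact Nat.find_min (hex y hy) hlt ⟨h0, by rw [← hx2]; exact hx⟩
      intro x y hxy
      rcases Classical.em (x ∈ A) with hx | hx <;> rcases Classical.em (y ∈ A) with hy | hy
      · rw [hfA x hx, hfA y hy] at hxy
        rcases le_total (Nat.find (hex x hx)) (Nat.find (hex y hy)) with hle | hle
        · exact key x hx y hy hle hxy
        · exact (key y hy x hx hle hxy.symm).symm
      · exfalso
        rw [hfA x hx, hfN y hy] at hxy
        exact hy (hxy ▸ (Nat.find_spec (hex x hx)).2)
      · exfalso
        rw [hfN x hx, hfA y hy] at hxy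
        exact hx (hxy ▸ (Nat.find_spec (hex y hy)).2)
      · rw [hfN x hx, hfN y hy] at hxy; exact hxy
    have hfbij : Function.Bijective f := Finite.injective_iff_bijective.mp hfinj
    set σ : Equiv.Perm α := Equiv.ofBijective f hfbij with hσdef
    have hσap : ∀ x, σ x = f x := fun x => rfl
    have hσ : ∀ x, x ∉ A → σ x = x := fun x hx => by rw [hσap, hfN x hx]
    have hfr : ∀ a ∈ A, ∃ k, 0 < k ∧ (π ^ k) a = σ a ∧
        ∀ j, 0 < j → j < k → (π ^ j) a ∉ A := by
      intro a ha
      refine ⟨Nat.find (hex a ha), (Nat.find_spec (hex a ha)).1, ?_, ?_⟩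
      · rw [hσap, hfA a ha]
      · intro j hj hjk hmem
        exact Nat.find_min (hex a ha) hjk ⟨hj, hmem⟩
    refine ⟨⟨⟨π * σ⁻¹, stc_cycle_cond hσ hfr⟩, ⟨σ, hσ⟩⟩, ?_⟩
    simp [inv_mul_cancel_right]
end

section
/- Commutant theorem (Schur–Weyl, FFT form): Let d, h ≥ 1 and let M ∈ Matrix (Fin h → Fin d) (Fin h → Fin d) ℚ. If M commutes with the h-fold Kronecker power K(fun _ => g) for every invertible matrix g : Matrix (Fin d) (Fin d) ℚ (i.e. M * K(fun _ => g) = K(fun _ => g) * M for all g in the general linear group), then M lies in the ℚ-linear span of the permutation operators P_σ, σ ∈ Equiv.Perm (Fin h). -/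
/-- The permutation operator `P_σ` on the `m`-th tensor power of the `d`-dimensional space,
realized as a matrix indexed by functions `Fin m → Fin d`. -/
def permMat (d m : ℕ) (R : Type*) [CommRing R] (σ : Equiv.Perm (Fin m)) :
    Matrix (Fin m → Fin d) (Fin m → Fin d) R :=
  Matrix.of fun f g => if g = f ∘ σ then 1 else 0

/-- The Kronecker product `K(x) = x 0 ⊗ x 1 ⊗ ⋯ ⊗ x (m-1)` of a family of `d × d` matrices. -/
def kron (d m : ℕ) (R : Type*) [CommRing R]
    (x : Fin m → Matrix (Fin d) (Fin d) R) :
    Matrix (Fin m → Fin d) (Fin m → Fin d) R :=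
  Matrix.of fun f g => ∏ i, x i (f i) (g i)

namespace SW
open Matrix Polynomial

variable {d m : ℕ}

lemma permMat_apply (σ : Equiv.Perm (Fin m)) (f g : Fin m → Fin d) :
    permMat d m ℚ σ f g = if g = f ∘ σ then 1 else 0 := rfl

lemma kron_apply (x : Fin m → Matrix (Fin d) (Fin d) ℚ) (f g : Fin m → Fin d) :
    kron d m ℚ x f g = ∏ i, x i (f i) (g i) := rfl

lemma permMat_mul (σ τ : Equiv.Perm (Fin m)) :
    permMat d m ℚ σ * permMat d m ℚ τ = permMat d m ℚ (σ * τ) := by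
  ext f g
  simp only [Matrix.mul_apply, permMat_apply]
  rw [Finset.sum_eq_single (f ∘ σ)]
  · have hc : (f ∘ σ) ∘ τ = f ∘ ⇑(σ * τ) := rfl
    simp [hc]
    congr
  · intro e _ he
    rw [if_neg he, zero_mul]
  · simp

lemma permMat_one : (permMat d m ℚ 1) = (1 : Matrix (Fin m → Fin d) (Fin m → Fin d) ℚ) := by
  ext f g
  simp [permMat_apply, Matrix.one_apply, eq_comm]

/-- block-diagonal embedding `Y ↦ Y ⊗ 1` -/
def Dm (Y : Matrix (Fin m → Fin d) (Fin m → Fin d) ℚ) :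
    Matrix ((Fin m → Fin d) × (Fin m → Fin d)) ((Fin m → Fin d) × (Fin m → Fin d)) ℚ :=
  Matrix.of fun p q => if p.2 = q.2 then Y p.1 q.1 else 0

lemma Dm_apply (Y : Matrix (Fin m → Fin d) (Fin m → Fin d) ℚ) (p q) :
    Dm Y p q = if p.2 = q.2 then Y p.1 q.1 else 0 := rfl

lemma Dm_mul_apply (Y : Matrix (Fin m → Fin d) (Fin m → Fin d) ℚ)
    (Z : Matrix ((Fin m → Fin d) × (Fin m → Fin d)) ((Fin m → Fin d) × (Fin m → Fin d)) ℚ)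
    (f i g j) :
    (Dm Y * Z) (f, i) (g, j) = ∑ e, Y f e * Z (e, i) (g, j) := by
  rw [Matrix.mul_apply, Fintype.sum_prod_type]
  refine Finset.sum_congr rfl fun e _ => ?_
  rw [Finset.sum_eq_single i]
  · rw [Dm_apply, if_pos rfl]
  · intro k _ hk
    rw [Dm_apply]
    have : ¬ (i = k) := fun h => hk h.symm
    rw [if_neg this, zero_mul]
  · simp

lemma mul_Dm_apply (Z : Matrix ((Fin m → Fin d) × (Fin m → Fin d)) ((Fin m → Fin d) × (Fin m → Fin d)) ℚ)
    (Y : Matrix (Fin m → Fin d) (Fin m → Fin d) ℚ) (f i g j) :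
    (Z * Dm Y) (f, i) (g, j) = ∑ e, Z (f, i) (e, j) * Y e g := by
  rw [Matrix.mul_apply, Fintype.sum_prod_type]
  refine Finset.sum_congr rfl fun e _ => ?_
  rw [Finset.sum_eq_single j]
  · rw [Dm_apply, if_pos rfl]
  · intro k _ hk
    rw [Dm_apply, if_neg hk, mul_zero]
  · simp

lemma Dm_mul (Y Z : Matrix (Fin m → Fin d) (Fin m → Fin d) ℚ) :
    Dm (Y * Z) = Dm Y * Dm Z := by
  ext ⟨f, i⟩ ⟨g, j⟩
  rw [Dm_mul_apply]
  by_cases h : i = j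
  · subst h
    simp [Dm_apply, Matrix.mul_apply]
  · simp [Dm_apply, h]

lemma Dm_one : Dm (1 : Matrix (Fin m → Fin d) (Fin m → Fin d) ℚ) = 1 := by
  ext ⟨f, i⟩ ⟨g, j⟩
  simp only [Dm_apply, Matrix.one_apply, Prod.mk.injEq]
  by_cases h : i = j <;> by_cases h2 : f = g <;> simp [h, h2, Prod.ext_iff]

/-- the cyclic vector -/
def wv : ((Fin m → Fin d) × (Fin m → Fin d)) → ℚ := fun p => if p.1 = p.2 then 1 else 0

lemma Dm_mulVec_wv (Y : Matrix (Fin m → Fin d) (Fin m → Fin d) ℚ) (f i) :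
    (Dm Y *ᵥ wv) (f, i) = Y f i := by
  rw [Matrix.mulVec, dotProduct, Fintype.sum_prod_type]
  have key : ∀ e, (∑ k, Dm Y (f, i) (e, k) * wv (e, k)) = if e = i then Y f i else 0 := by
    intro e
    rw [Finset.sum_eq_single e]
    · by_cases h : e = i
      · subst h; simp [Dm_apply, wv]
      · have : ¬ (i = e) := fun hh => h hh.symm
        simp [Dm_apply, wv, this, h]
    · intro k _ hk
      have : ¬ (e = k) := fun hh => hk hh.symm
      simp [wv, this]
    · simp
  rw [Finset.sum_congr rfl fun e _ => key e]
  simp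


lemma sum_mulVec {ι K : Type*} [Fintype K] [DecidableEq K] (s : Finset ι)
    (A : ι → Matrix K K ℚ) (x : K → ℚ) :
    (∑ i ∈ s, A i) *ᵥ x = ∑ i ∈ s, (A i) *ᵥ x := by
  ext k
  simp only [Matrix.mulVec, dotProduct, Matrix.sum_apply, Finset.sum_apply,
    Finset.sum_mul]
  rw [Finset.sum_comm]

lemma Dm_permMat_mul (σ τ : Equiv.Perm (Fin m)) :
    Dm (permMat d m ℚ σ) * Dm (permMat d m ℚ τ) = Dm (permMat d m ℚ (σ * τ)) := by
  rw [← Dm_mul, permMat_mul]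

lemma mem_span_of_commutes_with_commutant
    (M : Matrix (Fin m → Fin d) (Fin m → Fin d) ℚ)
    (hcomm : ∀ X : Matrix (Fin m → Fin d) (Fin m → Fin d) ℚ,
      (∀ σ : Equiv.Perm (Fin m), permMat d m ℚ σ * X = X * permMat d m ℚ σ) → M * X = X * M) :
    M ∈ Submodule.span ℚ (Set.range (fun σ : Equiv.Perm (Fin m) => permMat d m ℚ σ)) := by
  classical
  set S : Submodule ℚ (((Fin m → Fin d) × (Fin m → Fin d)) → ℚ) :=
    Submodule.span ℚ (Set.range (fun σ : Equiv.Perm (Fin m) => Dm (permMat d m ℚ σ) *ᵥ wv))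
    with hS
  -- S is stable under each Dm (permMat τ)
  have hstab : ∀ (τ : Equiv.Perm (Fin m)) (x), x ∈ S → Dm (permMat d m ℚ τ) *ᵥ x ∈ S := by
    intro τ x hx
    induction hx using Submodule.span_induction with
    | mem x hx =>
        obtain ⟨σ, rfl⟩ := hx
        rw [Matrix.mulVec_mulVec, Dm_permMat_mul]
        exact Submodule.subset_span ⟨τ * σ, rfl⟩
    | zero => rw [Matrix.mulVec_zero]; exact Submodule.zero_mem S
    | add x y _ _ hx hy => rw [Matrix.mulVec_add]; exact Submodule.add_mem S hx hy
    | smul c x _ hx => rw [Matrix.mulVec_smul]; exact Submodule.smul_mem S c hx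
  -- a projection onto S
  obtain ⟨T, hT⟩ := Submodule.exists_isCompl S
  set pr : (((Fin m → Fin d) × (Fin m → Fin d)) → ℚ) →ₗ[ℚ]
      (((Fin m → Fin d) × (Fin m → Fin d)) → ℚ) :=
    S.subtype ∘ₗ (S.linearProjOfIsCompl T hT) with hpr
  have hpr1 : ∀ x, pr x ∈ S := fun x => (S.linearProjOfIsCompl T hT x).2
  have hpr2 : ∀ x ∈ S, pr x = x := by
    intro x hx
    have h5 := Submodule.linearProjOfIsCompl_apply_left hT ⟨x, hx⟩
    exact congrArg Subtype.val h5
  set Pm := LinearMap.toMatrix' pr with hPmdef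
  have hPm : ∀ x, Pm *ᵥ x = pr x := by
    intro x
    rw [hPmdef, ← Matrix.toLin'_apply, Matrix.toLin'_toMatrix']
  -- the averaged projection
  set Q := ((m.factorial : ℚ))⁻¹ • ∑ σ : Equiv.Perm (Fin m),
      Dm (permMat d m ℚ σ) * Pm * Dm (permMat d m ℚ σ⁻¹) with hQ
  have hterm : ∀ (σ : Equiv.Perm (Fin m)) x,
      (Dm (permMat d m ℚ σ) * Pm * Dm (permMat d m ℚ σ⁻¹)) *ᵥ x
        = Dm (permMat d m ℚ σ) *ᵥ (pr (Dm (permMat d m ℚ σ⁻¹) *ᵥ x)) := by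
    intro σ x
    rw [← Matrix.mulVec_mulVec, ← Matrix.mulVec_mulVec, hPm]
  have hQS : ∀ x, Q *ᵥ x ∈ S := by
    intro x
    rw [hQ, Matrix.smul_mulVec, sum_mulVec]
    refine Submodule.smul_mem S _ (Submodule.sum_mem S fun σ _ => ?_)
    rw [hterm]
    exact hstab σ _ (hpr1 _)
  have hfact : ((m.factorial : ℚ)) ≠ 0 := Nat.cast_ne_zero.mpr (Nat.factorial_ne_zero m)
  have hQfix : ∀ x ∈ S, Q *ᵥ x = x := by
    intro x hx
    rw [hQ, Matrix.smul_mulVec, sum_mulVec]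
    have hone : ∀ σ : Equiv.Perm (Fin m),
        (Dm (permMat d m ℚ σ) * Pm * Dm (permMat d m ℚ σ⁻¹)) *ᵥ x = x := by
      intro σ
      rw [hterm, hpr2 _ (hstab σ⁻¹ x hx), Matrix.mulVec_mulVec, Dm_permMat_mul,
        mul_inv_cancel, permMat_one, Dm_one, Matrix.one_mulVec]
    rw [Finset.sum_congr rfl fun σ _ => hone σ, Finset.sum_const, Finset.card_univ,
      Fintype.card_perm, Fintype.card_fin]
    rw [← Nat.cast_smul_eq_nsmul ℚ, smul_smul, inv_mul_cancel₀ hfact, one_smul]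
  -- Q commutes with each Dm (permMat τ)
  have hQcomm : ∀ τ : Equiv.Perm (Fin m),
      Q * Dm (permMat d m ℚ τ) = Dm (permMat d m ℚ τ) * Q := by
    intro τ
    rw [hQ, Algebra.smul_mul_assoc, Algebra.mul_smul_comm]
    congr 1
    rw [Finset.sum_mul, Finset.mul_sum]
    refine Fintype.sum_equiv (Equiv.mulLeft τ⁻¹) _ _ fun σ => ?_
    simp only [Equiv.coe_mulLeft]
    rw [mul_assoc (Dm (permMat d m ℚ σ) * Pm), Dm_permMat_mul,
      ← mul_assoc (Dm (permMat d m ℚ τ)), ← mul_assoc (Dm (permMat d m ℚ τ)),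
      Dm_permMat_mul]
    have e1 : τ * (τ⁻¹ * σ) = σ := by group
    have e2 : (τ⁻¹ * σ)⁻¹ = σ⁻¹ * τ := by group
    rw [e1, e2]
  -- blocks of Q commute with all permMat σ, hence with M
  have hblock : ∀ i j : Fin m → Fin d,
      M * (Matrix.of fun f g => Q (f, i) (g, j))
        = (Matrix.of fun f g => Q (f, i) (g, j)) * M := by
    intro i j
    refine hcomm _ fun σ => ?_
    ext f g
    have h6 := congrFun (congrFun (hQcomm σ).symm (f, i)) (g, j)
    rw [Dm_mul_apply, mul_Dm_apply] at h6
    rw [Matrix.mul_apply, Matrix.mul_apply]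
    simpa using h6
  -- hence Dm M commutes with Q
  have hDMQ : Dm M * Q = Q * Dm M := by
    ext ⟨f, i⟩ ⟨g, j⟩
    rw [Dm_mul_apply, mul_Dm_apply]
    have h7 := congrFun (congrFun (hblock i j) f) g
    rw [Matrix.mul_apply, Matrix.mul_apply] at h7
    simpa using h7
  -- w ∈ S and conclude
  have hwS : wv ∈ (S : Submodule ℚ _) := by
    have : Dm (permMat d m ℚ (1 : Equiv.Perm (Fin m))) *ᵥ wv = wv := by
      rw [permMat_one, Dm_one, Matrix.one_mulVec]
    rw [← this]
    exact Submodule.subset_span ⟨1, rfl⟩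
  have hMwS : Dm M *ᵥ wv ∈ S := by
    have h8 : Dm M *ᵥ wv = Q *ᵥ (Dm M *ᵥ wv) := by
      conv_lhs => rw [← hQfix wv hwS]
      rw [Matrix.mulVec_mulVec, Matrix.mulVec_mulVec, hDMQ]
    rw [h8]
    exact hQS _
  rw [hS, Submodule.mem_span_range_iff_exists_fun] at hMwS
  obtain ⟨c, hc⟩ := hMwS
  have hMeq : M = ∑ σ : Equiv.Perm (Fin m), c σ • permMat d m ℚ σ := by
    refine Matrix.ext fun f i => ?_
    have h9 := congrFun hc (f, i)
    rw [Finset.sum_apply] at h9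
    simp only [Pi.smul_apply, smul_eq_mul] at h9
    rw [Dm_mulVec_wv] at h9
    rw [Matrix.sum_apply]
    simp only [Matrix.smul_apply, smul_eq_mul]
    rw [← h9]
    exact Finset.sum_congr rfl fun σ _ => by rw [Dm_mulVec_wv]
  rw [hMeq]
  exact Submodule.sum_mem _ fun σ _ =>
    Submodule.smul_mem _ _ (Submodule.subset_span ⟨σ, rfl⟩)

lemma neg_one_pow_sum {α : Type*} [DecidableEq α] (u : Finset α) :
    (∑ U ∈ u.powerset, (-1 : ℚ) ^ U.card) = if u = ∅ then 1 else 0 := by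
  have h := Finset.sum_powerset_neg_one_pow_card (x := u)
  have h2 : ((∑ U ∈ u.powerset, (-1 : ℤ) ^ U.card : ℤ) : ℚ)
      = ∑ U ∈ u.powerset, (-1 : ℚ) ^ U.card := by push_cast; rfl
  rw [← h2, h]
  split <;> norm_num

lemma coeff_eq (φ : Fin m → Fin m) :
    (∑ S : Finset (Fin m), if (∀ i, φ i ∈ S) then (-1 : ℚ) ^ (Sᶜ.card) else 0)
      = if Function.Bijective φ then 1 else 0 := by
  classical
  have h1 : (∑ S : Finset (Fin m), if (∀ i, φ i ∈ S) then (-1 : ℚ) ^ (Sᶜ.card) else 0)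
      = ∑ S : Finset (Fin m), if (∀ i, φ i ∈ Sᶜ) then (-1 : ℚ) ^ (S.card) else 0 := by
    refine (Fintype.sum_bijective (fun S : Finset (Fin m) => Sᶜ)
      (Function.Involutive.bijective fun S => compl_compl S) _ _ fun S => ?_).symm
    rw [compl_compl]
  rw [h1, ← Finset.sum_filter]
  have h2 : (Finset.univ.filter fun S : Finset (Fin m) => ∀ i, φ i ∈ Sᶜ)
      = ((Finset.univ.image φ)ᶜ).powerset := by
    ext S
    simp only [Finset.mem_filter, Finset.mem_univ, true_and, Finset.mem_powerset,
      Finset.subset_iff, Finset.mem_compl, Finset.mem_image]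
    aesop
  rw [h2, neg_one_pow_sum]
  congr 1
  rw [Finset.compl_eq_empty_iff, ← Finite.surjective_iff_bijective]
  simp [Finset.eq_univ_iff_forall, Finset.mem_image, Function.Surjective]

lemma sum_bijective_eq_sum_perm (F : (Fin m → Fin m) → ℚ) :
    (∑ φ : Fin m → Fin m, if Function.Bijective φ then F φ else 0)
      = ∑ σ : Equiv.Perm (Fin m), F σ := by
  classical
  rw [← Finset.sum_filter]
  refine Finset.sum_bij' (fun φ hφ => Equiv.ofBijective φ (by simpa using hφ))
    (fun σ _ => ⇑σ) (fun _ _ => Finset.mem_univ _)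
    (fun σ _ => Finset.mem_filter.mpr ⟨Finset.mem_univ _, σ.bijective⟩) (fun φ hφ => rfl)
    (fun σ _ => by ext x; rfl) (fun φ hφ => rfl)


lemma polarization (B : Fin m → Matrix (Fin d) (Fin d) ℚ) :
    (∑ σ : Equiv.Perm (Fin m), kron d m ℚ (fun i => B (σ i)))
      = ∑ S : Finset (Fin m), (-1 : ℚ) ^ (Sᶜ.card) • kron d m ℚ (fun _ => ∑ k ∈ S, B k) := by
  classical
  ext f g
  simp only [Matrix.sum_apply, Matrix.smul_apply, kron_apply, smul_eq_mul]
  refine Eq.symm ?_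
  have hS : ∀ S : Finset (Fin m),
      (∏ i, ∑ k ∈ S, B k (f i) (g i)) = ∑ φ : Fin m → Fin m,
        if (∀ i, φ i ∈ S) then ∏ i, B (φ i) (f i) (g i) else 0 := by
    intro S
    have hpi : Fintype.piFinset (fun _ : Fin m => S)
        = Finset.univ.filter (fun φ : Fin m → Fin m => ∀ i, φ i ∈ S) := by
      ext φ; simp [Fintype.mem_piFinset]
    rw [Finset.prod_univ_sum, hpi, Finset.sum_filter]
  calc (∑ S : Finset (Fin m), (-1:ℚ) ^ Sᶜ.card * ∏ i, ∑ k ∈ S, B k (f i) (g i))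
      = ∑ S : Finset (Fin m), ∑ φ : Fin m → Fin m,
          if (∀ i, φ i ∈ S) then (-1:ℚ) ^ Sᶜ.card * ∏ i, B (φ i) (f i) (g i) else 0 := by
        refine Finset.sum_congr rfl fun S _ => ?_
        rw [hS S, Finset.mul_sum]
        exact Finset.sum_congr rfl fun φ _ => by rw [mul_ite, mul_zero]
    _ = ∑ φ : Fin m → Fin m, (∑ S : Finset (Fin m),
          if (∀ i, φ i ∈ S) then (-1:ℚ) ^ Sᶜ.card else 0) * ∏ i, B (φ i) (f i) (g i) := by
        rw [Finset.sum_comm]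
        refine Finset.sum_congr rfl fun φ _ => ?_
        rw [Finset.sum_mul]
        exact Finset.sum_congr rfl fun S _ => by rw [ite_mul, zero_mul]
    _ = ∑ φ : Fin m → Fin m,
          if Function.Bijective φ then ∏ i, B (φ i) (f i) (g i) else 0 := by
        refine Finset.sum_congr rfl fun φ _ => ?_
        rw [coeff_eq φ, ite_mul, one_mul, zero_mul]
    _ = ∑ σ : Equiv.Perm (Fin m), ∏ i, B (σ i) (f i) (g i) :=
        sum_bijective_eq_sum_perm _


lemma kron_map {R S : Type*} [CommRing R] [CommRing S] (φ : R →+* S)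
    (x : Fin m → Matrix (Fin d) (Fin d) R) :
    (kron d m R x).map φ = kron d m S (fun i => (x i).map φ) := by
  ext f g
  show φ (∏ i, x i (f i) (g i)) = ∏ i, φ (x i (f i) (g i))
  exact map_prod φ _ _

lemma charmatrix_neg_eval (A : Matrix (Fin d) (Fin d) ℚ) (t : ℚ) :
    (Matrix.charmatrix (-A)).map (evalRingHom t) = A + t • 1 := by
  ext i j
  by_cases h : i = j
  · subst h
    simp [Matrix.charmatrix_apply, Matrix.diagonal_apply, Matrix.one_apply, add_comm]
  · simp [Matrix.charmatrix_apply, Matrix.diagonal_apply, Matrix.one_apply, h]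

lemma commute_all (M : Matrix (Fin m → Fin d) (Fin m → Fin d) ℚ)
    (hM : ∀ g : Matrix (Fin d) (Fin d) ℚ, IsUnit g →
      M * kron d m ℚ (fun _ => g) = kron d m ℚ (fun _ => g) * M)
    (A : Matrix (Fin d) (Fin d) ℚ) :
    M * kron d m ℚ (fun _ => A) = kron d m ℚ (fun _ => A) * M := by
  classical
  set AX : Matrix (Fin d) (Fin d) ℚ[X] := Matrix.charmatrix (-A) with hAXdef
  set Cm : Matrix (Fin m → Fin d) (Fin m → Fin d) ℚ[X] :=
    M.map Polynomial.C * kron d m ℚ[X] (fun _ => AX)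
      - kron d m ℚ[X] (fun _ => AX) * M.map Polynomial.C with hCm
  have heval : ∀ t : ℚ, Cm.map (evalRingHom t)
      = M * kron d m ℚ (fun _ => A + t • 1) - kron d m ℚ (fun _ => A + t • 1) * M := by
    intro t
    have h1 : (M.map Polynomial.C).map (evalRingHom t) = M := by
      ext f g; simp
    rw [hCm, Matrix.map_sub _ (map_sub _), Matrix.map_mul, Matrix.map_mul,
      kron_map, h1, charmatrix_neg_eval]
  -- the set of good parameters is infinite
  have hfin : Set.Finite {t : ℚ | ((-A).charpoly).IsRoot t} :=
    Polynomial.finite_setOf_isRoot ((-A).charpoly_monic.ne_zero)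
  have hgood : Set.Infinite {t : ℚ | IsUnit (A + t • (1 : Matrix (Fin d) (Fin d) ℚ))} := by
    refine Set.Infinite.mono ?_ hfin.infinite_compl
    intro t ht
    simp only [Set.mem_compl_iff, Set.mem_setOf_eq, IsRoot] at ht ⊢
    rw [Matrix.isUnit_iff_isUnit_det, isUnit_iff_ne_zero]
    intro hdet
    apply ht
    have h4 := RingHom.map_det (evalRingHom t) AX
    rw [RingHom.mapMatrix_apply, charmatrix_neg_eval, hdet] at h4
    calc eval t ((-A).charpoly) = (evalRingHom t) AX.det := rfl
      _ = 0 := h4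
  -- each entry of Cm is a polynomial with infinitely many roots
  have hzero : Cm = 0 := by
    refine Matrix.ext fun f g => ?_
    refine Polynomial.eq_zero_of_infinite_isRoot _ (Set.Infinite.mono ?_ hgood)
    intro t ht
    simp only [Set.mem_setOf_eq] at ht ⊢
    have h3 : Cm.map (evalRingHom t) f g = 0 := by
      rw [heval t, hM _ ht, sub_self]; rfl
    simpa [Matrix.map_apply, IsRoot] using h3
  have h0 := heval 0
  rw [hzero] at h0
  have : M * kron d m ℚ (fun _ => A + (0:ℚ) • 1) - kron d m ℚ (fun _ => A + (0:ℚ) • 1) * M = 0 := by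
    rw [← h0]; ext f g; simp
  rw [zero_smul, add_zero] at this
  exact sub_eq_zero.mp this


lemma comp_inv_iff (σ : Equiv.Perm (Fin m)) (f a : Fin m → Fin d) :
    f = a ∘ σ ↔ a = f ∘ ⇑σ⁻¹ := by
  constructor
  · intro h; rw [h]; funext x; simp
  · intro h; rw [h]; funext x; simp

lemma symTensor_apply (a b f g : Fin m → Fin d) :
    (∑ σ : Equiv.Perm (Fin m),
        kron d m ℚ (fun i => Matrix.single (a (σ i)) (b (σ i)) (1 : ℚ))) f g
      = ∑ σ : Equiv.Perm (Fin m), if f = a ∘ σ ∧ g = b ∘ σ then (1 : ℚ) else 0 := by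
  rw [Matrix.sum_apply]
  refine Finset.sum_congr rfl fun σ _ => ?_
  rw [kron_apply]
  have h1 : ∀ i : Fin m, Matrix.single (a (σ i)) (b (σ i)) (1 : ℚ) (f i) (g i)
      = if (a (σ i) = f i ∧ b (σ i) = g i) then (1 : ℚ) else 0 := fun i => rfl
  rw [Finset.prod_congr rfl fun i _ => h1 i, Finset.prod_boole]
  congr 1
  simp only [eq_iff_iff]
  constructor
  · intro hall
    exact ⟨funext fun i => (hall i (Finset.mem_univ i)).1.symm,
      funext fun i => (hall i (Finset.mem_univ i)).2.symm⟩
  · rintro ⟨h2, h3⟩ i _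
    exact ⟨(congrFun h2 i).symm, (congrFun h3 i).symm⟩

lemma inv_of_comm (X : Matrix (Fin m → Fin d) (Fin m → Fin d) ℚ)
    (hX : ∀ σ : Equiv.Perm (Fin m), permMat d m ℚ σ * X = X * permMat d m ℚ σ)
    (σ : Equiv.Perm (Fin m)) (f g : Fin m → Fin d) :
    X (f ∘ σ) (g ∘ σ) = X f g := by
  have h1 : ∀ f g : Fin m → Fin d, (permMat d m ℚ σ * X) f g = X (f ∘ σ) g := by
    intro f g
    rw [Matrix.mul_apply, Finset.sum_eq_single (f ∘ ⇑σ)]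
    · rw [permMat_apply, if_pos rfl, one_mul]
    · intro e _ he; rw [permMat_apply, if_neg he, zero_mul]
    · simp
  have h2 : ∀ f g : Fin m → Fin d, (X * permMat d m ℚ σ) f g = X f (g ∘ ⇑σ⁻¹) := by
    intro f g
    rw [Matrix.mul_apply, Finset.sum_eq_single (g ∘ ⇑σ⁻¹)]
    · rw [permMat_apply, if_pos ((comp_inv_iff σ g _).mpr rfl), mul_one]
    · intro e _ he
      rw [permMat_apply, if_neg (fun hcon => he ((comp_inv_iff σ g e).mp hcon)), mul_zero]
    · simp
  have h4 := congrFun (congrFun (hX σ) f) (g ∘ ⇑σ)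
  rw [h1, h2] at h4
  have h5 : (g ∘ ⇑σ) ∘ ⇑σ⁻¹ = g := by funext x; simp
  rwa [h5] at h4

lemma double_delta (A B : Fin m → Fin d) (X : Matrix (Fin m → Fin d) (Fin m → Fin d) ℚ) :
    (∑ a : Fin m → Fin d, ∑ b : Fin m → Fin d, if (a = A ∧ b = B) then X a b else 0)
      = X A B := by
  rw [Finset.sum_eq_single A]
  · rw [Finset.sum_eq_single B]
    · rw [if_pos ⟨rfl, rfl⟩]
    · intro b _ hb; rw [if_neg (fun hcon => hb hcon.2)]
    · simp
  · intro a _ ha; exact Finset.sum_eq_zero fun b _ => if_neg (fun hcon => ha hcon.1)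
  · simp

lemma avg (X : Matrix (Fin m → Fin d) (Fin m → Fin d) ℚ)
    (hXinv : ∀ (σ : Equiv.Perm (Fin m)) (f g : Fin m → Fin d), X (f ∘ σ) (g ∘ σ) = X f g) :
    (m.factorial : ℚ) • X = ∑ a : Fin m → Fin d, ∑ b : Fin m → Fin d, X a b •
      ∑ σ : Equiv.Perm (Fin m),
        kron d m ℚ (fun i => Matrix.single (a (σ i)) (b (σ i)) (1 : ℚ)) := by
  refine Matrix.ext fun f g => ?_
  simp only [Matrix.sum_apply, Matrix.smul_apply, smul_eq_mul]
  calc (m.factorial : ℚ) * X f g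
      = ∑ _σ : Equiv.Perm (Fin m), X f g := by
        rw [Finset.sum_const, Finset.card_univ, Fintype.card_perm, Fintype.card_fin,
          nsmul_eq_mul]
    _ = ∑ σ : Equiv.Perm (Fin m), X (f ∘ ⇑σ⁻¹) (g ∘ ⇑σ⁻¹) :=
        Finset.sum_congr rfl fun σ _ => (hXinv σ⁻¹ f g).symm
    _ = ∑ σ : Equiv.Perm (Fin m), ∑ a : Fin m → Fin d, ∑ b : Fin m → Fin d,
          if (a = f ∘ ⇑σ⁻¹ ∧ b = g ∘ ⇑σ⁻¹) then X a b else 0 :=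
        Finset.sum_congr rfl fun σ _ => (double_delta _ _ X).symm
    _ = ∑ a : Fin m → Fin d, ∑ b : Fin m → Fin d, ∑ σ : Equiv.Perm (Fin m),
          if (f = a ∘ σ ∧ g = b ∘ σ) then X a b else 0 := by
        rw [Finset.sum_comm]
        refine Finset.sum_congr rfl fun a _ => ?_
        rw [Finset.sum_comm]
        refine Finset.sum_congr rfl fun b _ => Finset.sum_congr rfl fun σ _ => ?_
        refine if_congr ?_ rfl rfl
        rw [comp_inv_iff σ f a, comp_inv_iff σ g b]
    _ = ∑ a : Fin m → Fin d, ∑ b : Fin m → Fin d, X a b *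
          ∑ σ : Equiv.Perm (Fin m),
            kron d m ℚ (fun i => Matrix.single (a (σ i)) (b (σ i)) (1 : ℚ)) f g := by
        refine Finset.sum_congr rfl fun a _ => Finset.sum_congr rfl fun b _ => ?_
        conv_rhs => rw [← Matrix.sum_apply]
        rw [symTensor_apply, Finset.mul_sum]
        exact Finset.sum_congr rfl fun σ _ => (mul_boole _ _).symm

end SW

/-- **Commutant theorem (Schur–Weyl, FFT form).**  A matrix acting on the `h`-th tensor power of
`ℚ^d` which commutes with the `h`-fold Kronecker power of every invertible `d × d` matrix lies in
the linear span of the permutation operators. -/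
theorem commutant_of_GL_is_span_of_permutations (d h : ℕ) (hd : 1 ≤ d) (hh : 1 ≤ h)
    (M : Matrix (Fin h → Fin d) (Fin h → Fin d) ℚ)
    (hM : ∀ g : Matrix (Fin d) (Fin d) ℚ, IsUnit g →
      M * kron d h ℚ (fun _ => g) = kron d h ℚ (fun _ => g) * M) :
    M ∈ Submodule.span ℚ (Set.range (fun σ : Equiv.Perm (Fin h) => permMat d h ℚ σ)) := by
  have hA := SW.commute_all M hM
  have hsym : ∀ B : Fin h → Matrix (Fin d) (Fin d) ℚ,
      M * (∑ σ : Equiv.Perm (Fin h), kron d h ℚ (fun i => B (σ i)))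
        = (∑ σ : Equiv.Perm (Fin h), kron d h ℚ (fun i => B (σ i))) * M := by
    intro B
    rw [SW.polarization, Finset.mul_sum, Finset.sum_mul]
    exact Finset.sum_congr rfl fun S _ => by
      rw [mul_smul_comm, smul_mul_assoc, hA]
  refine SW.mem_span_of_commutes_with_commutant M ?_
  intro X hX
  have havg := SW.avg X (SW.inv_of_comm X hX)
  have h1 : M * ((h.factorial : ℚ) • X) = ((h.factorial : ℚ) • X) * M := by
    rw [havg, Finset.mul_sum, Finset.sum_mul]
    refine Finset.sum_congr rfl fun a _ => ?_
    rw [Finset.mul_sum, Finset.sum_mul]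
    refine Finset.sum_congr rfl fun b _ => ?_
    rw [mul_smul_comm, smul_mul_assoc,
      hsym fun k => Matrix.single (a k) (b k) (1 : ℚ)]
  rw [mul_smul_comm, smul_mul_assoc] at h1
  exact smul_right_injective _ (Nat.cast_ne_zero.mpr (Nat.factorial_ne_zero h)) h1
end

section
/- Second fundamental theorem for tensor space: Let d, h ≥ 1 and let π : MonoidAlgebra ℚ (Equiv.Perm (Fin h)) → Matrix (Fin h → Fin d) (Fin h → Fin d) ℚ be the algebra homomorphism induced by σ ↦ P_σ. Then (a) the kernel of π is nonzero if and only if h > d, and (b) if h > d, the kernel of π equals the two-sided ideal of MonoidAlgebra ℚ (Equiv.Perm (Fin h)) generated by the antisymmetrizer a = ∑ sgn(σ) • σ, where the sum runs over all permutations σ of Fin h fixing every index i with (i : ℕ) ≥ d + 1 (a copy of the symmetric group S_{d+1} on the first d+1 letters). -/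
namespace SFTaux

variable {h : ℕ}

/-- sign as a rational -/
def sgnQ (σ : Equiv.Perm (Fin h)) : ℚ := ((Equiv.Perm.sign σ : ℤ) : ℚ)

lemma sgnQ_one : sgnQ (1 : Equiv.Perm (Fin h)) = 1 := by simp [sgnQ]

lemma sgnQ_mul (σ τ : Equiv.Perm (Fin h)) : sgnQ (σ * τ) = sgnQ σ * sgnQ τ := by
  simp [sgnQ, ← Int.cast_mul, ← Units.val_mul]

lemma sgnQ_swap {i j : Fin h} (hij : i ≠ j) : sgnQ (Equiv.swap i j) = -1 := by
  simp [sgnQ, Equiv.Perm.sign_swap hij]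

/-- base-h encoding of the value sequence of a permutation -/
def mval (σ : Equiv.Perm (Fin h)) : ℕ := ∑ p : Fin h, (σ p : ℕ) * h ^ (h - 1 - (p : ℕ))

lemma geo (hh : 1 ≤ h) (n : ℕ) : ∑ j ∈ Finset.range n, (h - 1) * h ^ j = h ^ n - 1 := by
  induction n with
  | zero => simp
  | succ n ih =>
      rw [Finset.sum_range_succ, ih, pow_succ]
      have h1 : 1 ≤ h ^ n := Nat.one_le_pow _ _ hh
      have h2 : h ^ n * 1 ≤ h ^ n * h := Nat.mul_le_mul_left _ hh
      rw [Nat.mul_one] at h2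
      have h3 : (h - 1) * h ^ n = h * h ^ n - h ^ n := by
        rw [Nat.sub_mul, Nat.one_mul]
      rw [h3]
      have : h * h ^ n = h ^ n * h := Nat.mul_comm _ _
      omega

/-- the suffix sum bound -/
lemma suffix_le (hh : 1 ≤ h) (p₀ : Fin h) (σ : Equiv.Perm (Fin h)) :
    ∑ p ∈ Finset.univ.filter (fun p : Fin h => p₀ < p), (σ p : ℕ) * h ^ (h - 1 - (p : ℕ))
      ≤ h ^ (h - 1 - (p₀ : ℕ)) - 1 := by
  set e₀ := h - 1 - (p₀ : ℕ) with he₀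
  calc ∑ p ∈ Finset.univ.filter (fun p : Fin h => p₀ < p), (σ p : ℕ) * h ^ (h - 1 - (p : ℕ))
      ≤ ∑ p ∈ Finset.univ.filter (fun p : Fin h => p₀ < p), (h - 1) * h ^ (h - 1 - (p : ℕ)) := by
        refine Finset.sum_le_sum fun p _ => Nat.mul_le_mul_right _ ?_
        have := (σ p).isLt; omega
    _ = ∑ j ∈ Finset.range e₀, (h - 1) * h ^ j := by
        refine Finset.sum_nbij' (fun p => h - 1 - (p : ℕ)) (fun j => ⟨h - 1 - j, by omega⟩) ?_ ?_ ?_ ?_ ?_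
        · intro p hp
          simp only [Finset.mem_filter, Finset.mem_univ, true_and] at hp
          simp only [Finset.mem_range]
          have hplt := p.isLt
          have : (p₀ : ℕ) < (p : ℕ) := hp
          omega
        · intro j hj
          simp only [Finset.mem_range] at hj
          simp only [Finset.mem_filter, Finset.mem_univ, true_and]
          rw [Fin.lt_def]
          simp only []
          have := p₀.isLt
          omega
        · intro p hp
          simp only [Finset.mem_filter, Finset.mem_univ, true_and] at hp
          have hplt := p.isLt
          have h1 : (p₀ : ℕ) < (p : ℕ) := hp
          show (⟨h - 1 - (h - 1 - (p:ℕ)), _⟩ : Fin h) = p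
          apply Fin.ext
          show h - 1 - (h - 1 - (p:ℕ)) = (p : ℕ)
          omega
        · intro j hj
          simp only [Finset.mem_range] at hj
          show h - 1 - ((⟨h - 1 - j, _⟩ : Fin h) : ℕ) = j
          show h - 1 - (h - 1 - j) = j
          omega
        · intro p hp; rfl
    _ = h ^ e₀ - 1 := geo hh e₀

/-- lexicographic comparison implies mval comparison -/
lemma mval_lt (hh : 1 ≤ h) {σ σ' : Equiv.Perm (Fin h)} (p₀ : Fin h)
    (hagree : ∀ q : Fin h, q < p₀ → σ q = σ' q) (hlt : σ p₀ < σ' p₀) :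
    mval σ < mval σ' := by
  classical
  have hsplit : ∀ τ : Equiv.Perm (Fin h), mval τ =
      (∑ p ∈ Finset.univ.filter (fun p : Fin h => p < p₀), (τ p : ℕ) * h ^ (h - 1 - (p : ℕ)))
      + (τ p₀ : ℕ) * h ^ (h - 1 - (p₀ : ℕ))
      + ∑ p ∈ Finset.univ.filter (fun p : Fin h => p₀ < p), (τ p : ℕ) * h ^ (h - 1 - (p : ℕ)) := by
    intro τ
    rw [mval]
    rw [← Finset.sum_filter_add_sum_filter_not Finset.univ (fun p : Fin h => p < p₀)]
    have : Finset.univ.filter (fun p : Fin h => ¬ p < p₀)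
        = insert p₀ (Finset.univ.filter (fun p : Fin h => p₀ < p)) := by
      ext p
      simp only [Finset.mem_filter, Finset.mem_univ, true_and, Finset.mem_insert, not_lt]
      constructor
      · intro hp
        rcases eq_or_lt_of_le hp with h1 | h1
        · exact Or.inl h1.symm
        · exact Or.inr h1
      · rintro (rfl | hp)
        · exact le_refl _
        · exact le_of_lt hp
    rw [this, Finset.sum_insert (by simp)]
    ring
  rw [hsplit σ, hsplit σ']
  have heq : (∑ p ∈ Finset.univ.filter (fun p : Fin h => p < p₀), (σ p : ℕ) * h ^ (h - 1 - (p : ℕ)))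
      = ∑ p ∈ Finset.univ.filter (fun p : Fin h => p < p₀), (σ' p : ℕ) * h ^ (h - 1 - (p : ℕ)) := by
    refine Finset.sum_congr rfl fun p hp => ?_
    simp only [Finset.mem_filter, Finset.mem_univ, true_and] at hp
    rw [hagree p hp]
  rw [heq]
  have hsuf := suffix_le hh p₀ σ
  have hpow : 1 ≤ h ^ (h - 1 - (p₀ : ℕ)) := Nat.one_le_pow _ _ hh
  have hc : (σ p₀ : ℕ) + 1 ≤ (σ' p₀ : ℕ) := hlt
  have : (σ p₀ : ℕ) * h ^ (h - 1 - (p₀ : ℕ)) + h ^ (h - 1 - (p₀ : ℕ))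
      ≤ (σ' p₀ : ℕ) * h ^ (h - 1 - (p₀ : ℕ)) := by
    calc (σ p₀ : ℕ) * h ^ (h - 1 - (p₀ : ℕ)) + h ^ (h - 1 - (p₀ : ℕ))
        = ((σ p₀ : ℕ) + 1) * h ^ (h - 1 - (p₀ : ℕ)) := by ring
      _ ≤ (σ' p₀ : ℕ) * h ^ (h - 1 - (p₀ : ℕ)) := Nat.mul_le_mul_right _ hc
  omega


variable {h d : ℕ}

/-- `s` is (the index set of) a strictly decreasing subsequence of the value sequence of `σ`. -/
def DecOn (σ : Equiv.Perm (Fin h)) (s : Finset (Fin h)) : Prop :=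
  ∀ a ∈ s, ∀ b ∈ s, a < b → σ b < σ a

instance (σ : Equiv.Perm (Fin h)) (s : Finset (Fin h)) : Decidable (DecOn σ s) := by
  unfold DecOn; infer_instance

/-- no decreasing subsequence of length `d+1` -/
def Good (d : ℕ) (σ : Equiv.Perm (Fin h)) : Prop :=
  ∀ s : Finset (Fin h), DecOn σ s → s.card ≤ d

/-- length of the longest decreasing subsequence ending at `p` -/
def L (σ : Equiv.Perm (Fin h)) (p : Fin h) : ℕ :=
  (Finset.univ.filter
    (fun s : Finset (Fin h) => DecOn σ s ∧ p ∈ s ∧ ∀ a ∈ s, a ≤ p)).sup Finset.card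

lemma singleton_mem_Lset (σ : Equiv.Perm (Fin h)) (p : Fin h) :
    {p} ∈ Finset.univ.filter
      (fun s : Finset (Fin h) => DecOn σ s ∧ p ∈ s ∧ ∀ a ∈ s, a ≤ p) := by
  refine Finset.mem_filter.mpr ⟨Finset.mem_univ _, ?_, Finset.mem_singleton_self p, ?_⟩
  · intro a ha b hb hab
    rw [Finset.mem_singleton] at ha hb
    subst ha; subst hb; exact absurd hab (lt_irrefl _)
  · intro a ha; rw [Finset.mem_singleton] at ha; subst ha; exact le_refl _

lemma one_le_L (σ : Equiv.Perm (Fin h)) (p : Fin h) : 1 ≤ L σ p := by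
  have := Finset.le_sup (f := Finset.card) (singleton_mem_Lset σ p)
  rw [Finset.card_singleton] at this
  exact this

lemma L_le (hg : Good d σ) (p : Fin h) : L σ p ≤ d := by
  refine Finset.sup_le fun s hs => ?_
  simp only [Finset.mem_filter, Finset.mem_univ, true_and] at hs
  exact hg s hs.1

lemma L_lt_L {σ : Equiv.Perm (Fin h)} {p q : Fin h} (hpq : p < q) (hv : σ q < σ p) :
    L σ p < L σ q := by
  classical
  obtain ⟨s, hs, hcard⟩ := Finset.exists_mem_eq_sup _
    ⟨{p}, singleton_mem_Lset σ p⟩ Finset.card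
  simp only [Finset.mem_filter, Finset.mem_univ, true_and] at hs
  obtain ⟨hdec, hpmem, hle⟩ := hs
  have hqs : q ∉ s := fun hq => absurd (hle q hq) (not_le.mpr hpq)
  have hmem : insert q s ∈ Finset.univ.filter
      (fun t : Finset (Fin h) => DecOn σ t ∧ q ∈ t ∧ ∀ a ∈ t, a ≤ q) := by
    refine Finset.mem_filter.mpr ⟨Finset.mem_univ _, ?_, Finset.mem_insert_self q s, ?_⟩
    · intro a ha b hb hab
      simp only [Finset.mem_insert] at ha hb
      rcases ha with rfl | ha
      · rcases hb with rfl | hb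
        · exact absurd hab (lt_irrefl _)
        · exact absurd hab (not_lt.mpr ((hle b hb).trans hpq.le))
      · rcases hb with rfl | hb
        · rcases eq_or_lt_of_le (hle a ha) with h1 | h1
          · subst h1; exact hv
          · exact hv.trans (hdec a ha p hpmem h1)
        · exact hdec a ha b hb hab
    · intro a ha
      simp only [Finset.mem_insert] at ha
      rcases ha with rfl | ha
      · exact le_refl _
      · exact (hle a ha).trans hpq.le
  have h5 := Finset.le_sup (f := Finset.card) hmem
  rw [Finset.card_insert_of_notMem hqs] at h5
  have h6 : s.card + 1 ≤ L σ q := h5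
  have h7 : L σ p = s.card := hcard
  omega

/-- the greedy coloring of positions -/
def cfun (d : ℕ) (hd : 1 ≤ d) (σ : Equiv.Perm (Fin h)) (p : Fin h) : Fin d :=
  ⟨min (L σ p - 1) (d - 1), by omega⟩

lemma cfun_prop {σ : Equiv.Perm (Fin h)} (hd : 1 ≤ d) (hg : Good d σ)
    {p q : Fin h} (hpq : p < q) (hc : cfun d hd σ p = cfun d hd σ q) : σ p < σ q := by
  rcases lt_trichotomy (σ p) (σ q) with h1 | h1 | h1
  · exact h1
  · exact absurd (σ.injective h1) (ne_of_lt hpq)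
  · exfalso
    have hL := L_lt_L hpq h1
    have h2 := one_le_L σ p
    have h3 := L_le hg p
    have h4 := L_le hg q
    have hval := congrArg Fin.val hc
    simp only [cfun] at hval
    omega

lemma bad_exists_dec {σ : Equiv.Perm (Fin h)} (hb : ¬ Good d σ) :
    ∃ s : Finset (Fin h), DecOn σ s ∧ s.card = d + 1 := by
  simp only [Good, not_forall] at hb
  obtain ⟨s, hdec, hcard⟩ := hb
  have : d + 1 ≤ s.card := by omega
  obtain ⟨t, hts, htcard⟩ := Finset.exists_subset_card_eq this
  exact ⟨t, fun a ha b hb hab => hdec a (hts ha) b (hts hb) hab, htcard⟩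

abbrev G (h : ℕ) := Equiv.Perm (Fin h)
abbrev RA (h : ℕ) := MonoidAlgebra ℚ (G h)

/-- permutations supported in `S` -/
def filt (S : Finset (Fin h)) : Finset (G h) :=
  Finset.univ.filter (fun ρ : G h => ∀ v ∉ S, ρ v = v)

lemma mem_filt {S : Finset (Fin h)} {ρ : G h} :
    ρ ∈ filt S ↔ ∀ v ∉ S, ρ v = v := by
  simp [filt]

lemma one_mem_filt {S : Finset (Fin h)} : (1 : G h) ∈ filt S :=
  mem_filt.mpr fun v _ => rfl

lemma filt_maps {S : Finset (Fin h)} {ρ : G h} (hρ : ρ ∈ filt S) {v : Fin h}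
    (hv : v ∈ S) : ρ v ∈ S := by
  by_contra hc
  have h1 : ρ (ρ v) = ρ v := (mem_filt.mp hρ) _ hc
  have h2 : ρ v = v := ρ.injective h1
  rw [h2] at hc
  exact hc hv

/-- the antisymmetrizer over `S` -/
noncomputable def Asym (S : Finset (Fin h)) : RA h :=
  ∑ ρ ∈ filt S, sgnQ ρ • MonoidAlgebra.of ℚ (G h) ρ

/-- decomposition of an element of the monoid algebra -/
lemma decomp (x : RA h) :
    x = ∑ σ : G h, x.coeff σ • MonoidAlgebra.of ℚ (G h) σ := by
  classical
  have h1 : x = Finsupp.sum x.coeff (fun σ c => MonoidAlgebra.single σ c) :=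
    (MonoidAlgebra.sum_coeff_single x).symm
  have h2 : Finsupp.sum x.coeff (fun σ c => MonoidAlgebra.single σ c)
      = ∑ σ ∈ x.coeff.support, MonoidAlgebra.single σ (x.coeff σ) := rfl
  have h3 : ∑ σ ∈ x.coeff.support, MonoidAlgebra.single σ (x.coeff σ)
      = ∑ σ : G h, MonoidAlgebra.single σ (x.coeff σ) := by
    refine Finset.sum_subset (Finset.subset_univ _) ?_
    intro σ _ hσ
    rw [Finsupp.notMem_support_iff.mp hσ, MonoidAlgebra.single_zero]
  have h4 : ∀ σ : G h, MonoidAlgebra.single σ (x.coeff σ) = x.coeff σ • MonoidAlgebra.of ℚ (G h) σ := by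
    intro σ
    rw [MonoidAlgebra.of_apply, MonoidAlgebra.smul_single', mul_one]
  calc x = Finsupp.sum x.coeff (fun σ c => MonoidAlgebra.single σ c) := h1
    _ = ∑ σ ∈ x.coeff.support, MonoidAlgebra.single σ (x.coeff σ) := h2
    _ = ∑ σ : G h, MonoidAlgebra.single σ (x.coeff σ) := h3
    _ = ∑ σ : G h, x.coeff σ • MonoidAlgebra.of ℚ (G h) σ :=
        Finset.sum_congr rfl fun σ _ => h4 σ

section Pi

variable (hdh : 1 ≤ d) (π : RA h →ₐ[ℚ] Matrix (Fin h → Fin d) (Fin h → Fin d) ℚ)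
variable (hπ : ∀ σ : G h, π (MonoidAlgebra.of ℚ (G h) σ) = permMat d h ℚ σ)

include hπ in
lemma pi_apply (x : RA h) (f g : Fin h → Fin d) :
    π x f g = ∑ σ : G h, x.coeff σ * (if g = f ∘ σ then 1 else 0) := by
  conv_lhs => rw [decomp x]
  rw [map_sum]
  have : ∀ σ : G h, π (x.coeff σ • MonoidAlgebra.of ℚ (G h) σ) = x.coeff σ • permMat d h ℚ σ := by
    intro σ; rw [map_smul, hπ]
  rw [Finset.sum_congr rfl fun σ _ => this σ]
  rw [Matrix.sum_apply]
  refine Finset.sum_congr rfl fun σ _ => ?_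
  rw [Matrix.smul_apply, permMat, Matrix.of_apply, smul_eq_mul]

include hπ in
lemma pi_Asym (S : Finset (Fin h)) (hS : S.card = d + 1) : π (Asym S) = 0 := by
  classical
  rw [Asym, map_sum]
  rw [Finset.sum_congr rfl fun ρ _ => map_smul π (sgnQ ρ) (MonoidAlgebra.of ℚ (G h) ρ)]
  have hmaps : ∀ σ : G h, σ ∈ filt S → ∀ v ∈ S, σ v ∈ S := fun σ hσ v hv => filt_maps hσ hv
  ext f g
  rw [Matrix.sum_apply]
  have hsum : ∀ ρ : G h, (sgnQ ρ • π (MonoidAlgebra.of ℚ (G h) ρ)) f g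
      = sgnQ ρ * (if g = f ∘ ρ then 1 else 0) := by
    intro ρ
    rw [hπ, Matrix.smul_apply, permMat, Matrix.of_apply, smul_eq_mul]
  rw [Finset.sum_congr rfl fun ρ _ => hsum ρ, Matrix.zero_apply]
  -- pigeonhole: two elements of S with same f-value
  have hpig : ∃ i ∈ S, ∃ j ∈ S, i ≠ j ∧ f i = f j := by
    have hcard : (Finset.univ : Finset (Fin d)).card * 1 < S.card := by
      simp [hS]
    obtain ⟨y, -, hy⟩ := Finset.exists_lt_card_fiber_of_mul_lt_card_of_maps_to
      (f := f) (s := S) (t := Finset.univ) (fun x _ => Finset.mem_univ _) hcard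
    have h2 : 1 < (S.filter (fun x => f x = y)).card := hy
    obtain ⟨i, hi, j, hj, hij⟩ := Finset.one_lt_card.mp h2
    rw [Finset.mem_filter] at hi hj
    exact ⟨i, hi.1, j, hj.1, hij, by rw [hi.2, hj.2]⟩
  obtain ⟨i, hiS, j, hjS, hij, hfij⟩ := hpig
  set τ := Equiv.swap i j with hτ
  have hfτ : ∀ v : Fin h, f (τ v) = f v := by
    intro v
    rcases eq_or_ne v i with rfl | hvi
    · rw [hτ, Equiv.swap_apply_left, hfij]
    · rcases eq_or_ne v j with rfl | hvj
      · rw [hτ, Equiv.swap_apply_right, hfij]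
      · rw [hτ, Equiv.swap_apply_of_ne_of_ne hvi hvj]
  refine Finset.sum_involution (fun ρ _ => τ * ρ) ?_ ?_ ?_ ?_
  · intro ρ hρ
    have hcomp : f ∘ ⇑(τ * ρ) = f ∘ ⇑ρ := by
      funext p
      show f (τ (ρ p)) = f (ρ p)
      rw [hfτ]
    have hcond : (g = f ∘ (τ * ρ)) ↔ (g = f ∘ ρ) := by rw [hcomp]
    rw [sgnQ_mul, sgnQ_swap hij]
    by_cases hgf : g = f ∘ ρ
    · rw [if_pos hgf, if_pos (hcond.mpr hgf)]; ring
    · rw [if_neg hgf, if_neg (fun hcc => hgf (hcond.mp hcc))]; ring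
  · intro ρ hρ _
    intro hcc
    have : τ = 1 := by
      have := congrArg (fun z => z * ρ⁻¹) hcc
      simpa [mul_assoc] using this
    have : τ i = i := by rw [this]; rfl
    rw [hτ, Equiv.swap_apply_left] at this
    exact hij this.symm
  · intro ρ hρ
    rw [mem_filt] at hρ ⊢
    intro v hv
    have hvi : v ≠ i := fun hc => hv (hc ▸ hiS)
    have hvj : v ≠ j := fun hc => hv (hc ▸ hjS)
    show τ (ρ v) = v
    rw [hρ v hv, hτ, Equiv.swap_apply_of_ne_of_ne hvi hvj]
  · intro ρ hρ
    show τ * (τ * ρ) = ρ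
    rw [← mul_assoc, hτ, Equiv.swap_mul_self, one_mul]

end Pi

/-- submodule spanned by good permutations -/
noncomputable def GoodSub (d h : ℕ) : Submodule ℚ (RA h) :=
  Submodule.span ℚ {y : RA h | ∃ σ : G h, Good d σ ∧ y = MonoidAlgebra.of ℚ (G h) σ}

/-- submodule spanned by the translated antisymmetrizers -/
noncomputable def Jzero (d h : ℕ) : Submodule ℚ (RA h) :=
  Submodule.span ℚ {y : RA h | ∃ S : Finset (Fin h), ∃ τ : G h,
    S.card = d + 1 ∧ y = Asym S * MonoidAlgebra.of ℚ (G h) τ}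

lemma Asym_mul_of (S : Finset (Fin h)) (τ : G h) :
    Asym S * MonoidAlgebra.of ℚ (G h) τ
      = ∑ ρ ∈ filt S, sgnQ ρ • MonoidAlgebra.of ℚ (G h) (ρ * τ) := by
  rw [Asym, Finset.sum_mul]
  refine Finset.sum_congr rfl fun ρ _ => ?_
  rw [smul_mul_assoc, ← map_mul]

lemma step_down {σ : Equiv.Perm (Fin h)} {s : Finset (Fin h)} (hdec : DecOn σ s)
    {ρ : G h} (hρ : ρ ∈ filt (s.image σ)) (hne : ρ ≠ 1) :
    mval (ρ * σ) < mval σ := by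
  classical
  set D := Finset.univ.filter (fun p : Fin h => ρ (σ p) ≠ σ p) with hD
  have hDne : D.Nonempty := by
    have : ∃ v, ρ v ≠ v := by
      by_contra hc
      push_neg at hc
      exact hne (Equiv.ext hc)
    obtain ⟨v, hv⟩ := this
    exact ⟨σ.symm v, by simp [hD, hv]⟩
  set p₀ := D.min' hDne with hp₀
  have hp₀D : p₀ ∈ D := D.min'_mem hDne
  have hp₀ne : ρ (σ p₀) ≠ σ p₀ := by
    have := hp₀D; rw [hD, Finset.mem_filter] at this; exact this.2
  have hagree : ∀ q : Fin h, q < p₀ → (ρ * σ) q = σ q := by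
    intro q hq
    by_contra hc
    have hqD : q ∈ D := by
      rw [hD, Finset.mem_filter]
      exact ⟨Finset.mem_univ _, fun hcc => hc (by simpa [Equiv.Perm.mul_apply] using hcc)⟩
    exact absurd (D.min'_le q hqD) (not_le.mpr hq)
  have hvS : σ p₀ ∈ s.image σ := by
    by_contra hc
    exact hp₀ne ((mem_filt.mp hρ) _ hc)
  have hp₀s : p₀ ∈ s := by
    obtain ⟨p', hp's, hp'⟩ := Finset.mem_image.mp hvS
    exact σ.injective hp' ▸ hp's
  have hρvS : ρ (σ p₀) ∈ s.image σ := filt_maps hρ hvS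
  obtain ⟨q', hq's, hq'⟩ := Finset.mem_image.mp hρvS
  have hq'ne : q' ≠ p₀ := by
    intro hc; subst hc; exact hp₀ne hq'.symm
  have hq'gt : p₀ < q' := by
    rcases lt_or_gt_of_ne hq'ne with hlt | hgt
    · exfalso
      have : (ρ * σ) q' = σ q' := hagree q' hlt
      have h1 : ρ (σ q') = σ q' := this
      rw [hq'] at h1
      exact hp₀ne (ρ.injective h1)
    · exact hgt
  have hlt : (ρ * σ) p₀ < σ p₀ := by
    have h2 : σ q' < σ p₀ := hdec p₀ hp₀s q' hq's hq'gt
    rw [hq'] at h2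
    exact h2
  exact mval_lt p₀.pos p₀ hagree hlt

/-- every basis permutation lies in `GoodSub ⊔ Jzero` -/
lemma of_mem_sup (σ : G h) :
    MonoidAlgebra.of ℚ (G h) σ ∈ GoodSub d h ⊔ Jzero d h := by
  classical
  suffices H : ∀ n : ℕ, ∀ σ : G h, mval σ < n →
      MonoidAlgebra.of ℚ (G h) σ ∈ GoodSub d h ⊔ Jzero d h by
    exact H (mval σ + 1) σ (Nat.lt_succ_self _)
  intro n
  induction n with
  | zero => intro σ hσ; exact absurd hσ (Nat.not_lt_zero _)
  | succ n ih =>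
      intro σ hσ
      by_cases hgood : Good d σ
      · exact Submodule.mem_sup_left (Submodule.subset_span ⟨σ, hgood, rfl⟩)
      · obtain ⟨s, hdec, hcard⟩ := bad_exists_dec hgood
        set S := s.image σ with hS
        have hScard : S.card = d + 1 := by
          rw [hS, Finset.card_image_of_injective _ σ.injective, hcard]
        have hid : MonoidAlgebra.of ℚ (G h) σ
            = Asym S * MonoidAlgebra.of ℚ (G h) σ
              - ∑ ρ ∈ (filt S).erase 1, sgnQ ρ • MonoidAlgebra.of ℚ (G h) (ρ * σ) := by
          rw [Asym_mul_of]
          rw [← Finset.add_sum_erase _ _ (one_mem_filt (S := S))]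
          rw [sgnQ_one, one_smul, one_mul]
          abel
        rw [hid]
        refine Submodule.sub_mem _ ?_ ?_
        · exact Submodule.mem_sup_right (Submodule.subset_span ⟨S, σ, hScard, rfl⟩)
        · refine Submodule.sum_mem _ fun ρ hρ => ?_
          rw [Finset.mem_erase] at hρ
          refine Submodule.smul_mem _ _ (ih (ρ * σ) ?_)
          have := step_down hdec hρ.2 hρ.1
          omega

lemma good_support {x : RA h} (hx : x ∈ GoodSub d h) :
    ∀ τ ∈ x.coeff.support, Good d τ := by
  classical
  refine Submodule.span_induction ?_ ?_ ?_ ?_ hx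
  · rintro y ⟨σ, hσ, rfl⟩ τ hτ
    have : τ = σ := by
      have := Finsupp.support_single_subset (a := σ) (b := (1:ℚ)) hτ
      simpa using this
    rwa [this]
  · intro τ hτ; simp at hτ
  · intro y z hy hz hy' hz' τ hτ
    rcases Finset.mem_union.mp (Finsupp.support_add hτ) with h1 | h1
    · exact hy' τ h1
    · exact hz' τ h1
  · intro c y hy hy' τ hτ
    exact hy' τ (Finsupp.support_smul hτ)

section Pi2

variable {π : RA h →ₐ[ℚ] Matrix (Fin h → Fin d) (Fin h → Fin d) ℚ}
variable (hπ : ∀ σ : G h, π (MonoidAlgebra.of ℚ (G h) σ) = permMat d h ℚ σ)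

include hπ in
/-- linear independence of the images of good permutations -/
lemma indep (hd : 1 ≤ d) {x : RA h} (hx : x ∈ GoodSub d h) (hz : π x = 0) : x = 0 := by
  classical
  by_contra hne
  have hsupp : x.coeff.support.Nonempty :=
    Finsupp.support_nonempty_iff.mpr (fun hc => hne (MonoidAlgebra.coeff_eq_zero.mp hc))
  obtain ⟨σ, hσmem, hσmax⟩ := Finset.exists_max_image x.coeff.support mval hsupp
  have hgood : Good d σ := good_support hx σ hσmem
  set f : Fin h → Fin d := fun v => cfun d hd σ (σ.symm v) with hf
  have hkey : ∀ σ' : G h, σ' ≠ σ → (f ∘ ⇑σ = f ∘ ⇑σ') → mval σ < mval σ' := by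
    intro σ' hne' hff
    set D := Finset.univ.filter (fun p : Fin h => σ' p ≠ σ p) with hD
    have hDne : D.Nonempty := by
      by_contra hc
      rw [Finset.not_nonempty_iff_eq_empty] at hc
      refine hne' (Equiv.ext fun p => ?_)
      by_contra hcc
      have : p ∈ D := by rw [hD, Finset.mem_filter]; exact ⟨Finset.mem_univ _, hcc⟩
      rw [hc] at this
      exact absurd this (Finset.notMem_empty p)
    set p₀ := D.min' hDne with hp₀def
    have hp₀D : p₀ ∈ D := D.min'_mem hDne
    have hp₀ne : σ' p₀ ≠ σ p₀ := by
      have := hp₀D; rw [hD, Finset.mem_filter] at this; exact this.2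
    have hagree : ∀ q : Fin h, q < p₀ → σ q = σ' q := by
      intro q hq
      by_contra hc
      have hqD : q ∈ D := by
        rw [hD, Finset.mem_filter]
        exact ⟨Finset.mem_univ _, fun hcc => hc hcc.symm⟩
      exact absurd (D.min'_le q hqD) (not_le.mpr hq)
    refine mval_lt p₀.pos p₀ hagree ?_
    -- show σ p₀ < σ' p₀
    set q := σ.symm (σ' p₀) with hqdef
    have hq : σ q = σ' p₀ := σ.apply_symm_apply _
    have hcq : cfun d hd σ q = cfun d hd σ p₀ := by
      have h1 : f (σ p₀) = f (σ' p₀) := congrFun hff p₀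
      rw [hf] at h1
      simpa [Equiv.symm_apply_apply] using h1.symm
    have hqne : q ≠ p₀ := by
      intro hc
      rw [hc] at hq
      exact hp₀ne hq.symm
    rcases lt_or_gt_of_ne hqne with hlt | hgt
    · exfalso
      have h2 : σ q = σ' q := hagree q hlt
      rw [hq] at h2
      exact hqne (σ'.injective h2.symm)
    · have := cfun_prop hd hgood hgt hcq.symm
      rwa [hq] at this
  have hentry := pi_apply π hπ x f (f ∘ ⇑σ)
  rw [hz] at hentry
  have hzero : (0 : Matrix (Fin h → Fin d) (Fin h → Fin d) ℚ) f (f ∘ ⇑σ) = 0 := rfl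
  rw [hzero] at hentry
  have hsum : ∑ σ' : G h, x.coeff σ' * (if f ∘ ⇑σ = f ∘ ⇑σ' then 1 else 0) = x.coeff σ := by
    rw [Finset.sum_eq_single σ]
    · rw [if_pos rfl, mul_one]
    · intro σ' _ hne'
      by_cases hcc : f ∘ ⇑σ = f ∘ ⇑σ'
      · have hlt := hkey σ' hne' hcc
        have : σ' ∉ x.coeff.support := fun hmem => absurd (hσmax σ' hmem) (not_le.mpr hlt)
        rw [Finsupp.notMem_support_iff.mp this, zero_mul]
      · rw [if_neg hcc, mul_zero]
    · intro hc; exact absurd (Finset.mem_univ σ) hc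
  rw [hsum] at hentry
  exact absurd hentry.symm (Finsupp.mem_support_iff.mp hσmem)

include hπ in
/-- injectivity when `h ≤ d` -/
lemma pi_inj (hhd : h ≤ d) {x : RA h} (hz : π x = 0) : x = 0 := by
  classical
  have hf₀ : Function.Injective (Fin.castLE hhd) := Fin.castLE_injective hhd
  set f₀ : Fin h → Fin d := Fin.castLE hhd with hf₀def
  refine MonoidAlgebra.ext (Finsupp.ext fun σ => ?_)
  have hentry := pi_apply π hπ x f₀ (f₀ ∘ ⇑σ)
  rw [hz] at hentry
  have hzero : (0 : Matrix (Fin h → Fin d) (Fin h → Fin d) ℚ) f₀ (f₀ ∘ ⇑σ) = 0 := rfl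
  rw [hzero] at hentry
  have hsum : ∑ σ' : G h, x.coeff σ' * (if f₀ ∘ ⇑σ = f₀ ∘ ⇑σ' then 1 else 0) = x.coeff σ := by
    rw [Finset.sum_eq_single σ]
    · rw [if_pos rfl, mul_one]
    · intro σ' _ hne'
      have hcc : ¬ (f₀ ∘ ⇑σ = f₀ ∘ ⇑σ') := by
        intro hcc
        refine hne' (Equiv.ext fun p => (hf₀ (congrFun hcc p)).symm)
      rw [if_neg hcc, mul_zero]
    · intro hc; exact absurd (Finset.mem_univ σ) hc
  rw [hsum] at hentry
  exact hentry.symm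

end Pi2

/-- a permutation mapping one finset onto another of the same cardinality -/
lemma exists_perm_image {S T : Finset (Fin h)} (hc : S.card = T.card) :
    ∃ g : G h, S.image g = T := by
  classical
  have hcc : Sᶜ.card = Tᶜ.card := by
    rw [Finset.card_compl, Finset.card_compl, hc]
  set eS : {x // x ∈ S} ≃ {x // x ∈ T} := Finset.equivOfCardEq hc with heS
  set eC : {x // x ∈ Sᶜ} ≃ {x // x ∈ Tᶜ} := Finset.equivOfCardEq hcc with heC
  set eS' : {x // ¬ x ∈ S} ≃ {x // ¬ x ∈ T} :=
    ((Equiv.subtypeEquivRight (fun x => (Finset.mem_compl (s := S)).symm)).trans eC).trans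
      (Equiv.subtypeEquivRight (fun x => Finset.mem_compl (s := T))) with heS'
  set g : G h := ((Equiv.sumCompl (· ∈ S)).symm.trans
    ((Equiv.sumCongr eS eS').trans (Equiv.sumCompl (· ∈ T)))) with hg
  have hmaps : ∀ x ∈ S, g x ∈ T := by
    intro x hx
    rw [hg]
    simp only [Equiv.trans_apply, Equiv.sumCompl_symm_apply_of_pos hx,
      Equiv.sumCongr_apply, Sum.map_inl, Equiv.sumCompl_apply_inl]
    exact (eS ⟨x, hx⟩).2
  refine ⟨g, Finset.eq_of_subset_of_card_le ?_ ?_⟩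
  · intro y hy
    obtain ⟨x, hx, rfl⟩ := Finset.mem_image.mp hy
    exact hmaps x hx
  · rw [Finset.card_image_of_injective _ g.injective, hc]

/-- conjugation of antisymmetrizers -/
lemma Asym_conj (g : G h) (S : Finset (Fin h)) :
    MonoidAlgebra.of ℚ (G h) g * Asym S * MonoidAlgebra.of ℚ (G h) g⁻¹
      = Asym (S.image g) := by
  classical
  rw [Asym, Finset.mul_sum, Finset.sum_mul, Asym]
  have hterm : ∀ ρ : G h,
      MonoidAlgebra.of ℚ (G h) g * (sgnQ ρ • MonoidAlgebra.of ℚ (G h) ρ)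
        * MonoidAlgebra.of ℚ (G h) g⁻¹
      = sgnQ ρ • MonoidAlgebra.of ℚ (G h) (g * ρ * g⁻¹) := by
    intro ρ
    rw [mul_smul_comm, smul_mul_assoc, ← map_mul, ← map_mul]
  rw [Finset.sum_congr rfl fun ρ _ => hterm ρ]
  refine Finset.sum_nbij' (fun ρ => g * ρ * g⁻¹) (fun ρ' => g⁻¹ * ρ' * g) ?_ ?_ ?_ ?_ ?_
  · intro ρ hρ
    rw [mem_filt] at hρ ⊢
    intro v hv
    have hgv : g⁻¹ v ∉ S := by
      intro hc
      exact hv (Finset.mem_image.mpr ⟨g⁻¹ v, hc, g.apply_symm_apply v⟩)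
    show g (ρ (g⁻¹ v)) = v
    rw [hρ _ hgv]
    exact g.apply_symm_apply v
  · intro ρ' hρ'
    rw [mem_filt] at hρ' ⊢
    intro v hv
    have hgv : g v ∉ S.image g := by
      intro hc
      obtain ⟨w, hw, hww⟩ := Finset.mem_image.mp hc
      exact hv (g.injective hww ▸ hw)
    show g⁻¹ (ρ' (g v)) = v
    rw [hρ' _ hgv]
    exact g.symm_apply_apply v
  · intro ρ _
    group
  · intro ρ' _
    group
  · intro ρ _
    have hsgn : sgnQ (g * ρ * g⁻¹) = sgnQ ρ := by
      rw [sgnQ_mul, sgnQ_mul]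
      have h1 : sgnQ (g⁻¹ : G h) * sgnQ g = 1 := by
        rw [← sgnQ_mul, inv_mul_cancel, sgnQ_one]
      have h2 : sgnQ g * sgnQ ρ * sgnQ g⁻¹ = sgnQ ρ * (sgnQ g⁻¹ * sgnQ g) := by ring
      rw [h2, h1, mul_one]
    rw [hsgn]

/-- the canonical first-(d+1)-letters set -/
def Szero (d h : ℕ) : Finset (Fin h) := Finset.univ.filter (fun i : Fin h => (i : ℕ) < d + 1)

lemma Szero_card (hdh : d + 1 ≤ h) : (Szero d h).card = d + 1 := by
  classical
  rw [Szero]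
  rw [show (Finset.univ.filter (fun i : Fin h => (i : ℕ) < d + 1))
      = Finset.map (Fin.castLEEmb hdh) Finset.univ from ?_]
  · rw [Finset.card_map, Finset.card_univ, Fintype.card_fin]
  · ext i
    simp only [Finset.mem_filter, Finset.mem_univ, true_and, Finset.mem_map]
    constructor
    · intro hi
      exact ⟨⟨(i : ℕ), hi⟩, Fin.ext rfl⟩
    · rintro ⟨j, rfl⟩
      exact j.isLt

/-- the antisymmetrizer over the first `d+1` letters -/
noncomputable def agen (d h : ℕ) : RA h := Asym (Szero d h)

lemma agen_apply_one : (agen d h).coeff 1 = 1 := by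
  classical
  rw [agen, Asym]
  rw [MonoidAlgebra.coeff_sum, Finset.sum_apply']
  rw [Finset.sum_eq_single (1 : G h)]
  · rw [sgnQ_one, one_smul, MonoidAlgebra.of_apply, MonoidAlgebra.coeff_single_apply, if_pos rfl]
  · intro ρ _ hρne
    rw [MonoidAlgebra.coeff_smul_apply, MonoidAlgebra.of_apply, MonoidAlgebra.coeff_single_apply,
      if_neg hρne, smul_zero]
  · intro hc
    exact absurd (one_mem_filt (S := Szero d h)) hc

lemma agen_ne_zero : agen d h ≠ 0 := by
  intro hc
  have := agen_apply_one (d := d) (h := h)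
  rw [hc] at this
  simp at this

lemma agen_def : agen d h = Asym (Szero d h) := rfl

lemma Asym_mem_span (hdh : d + 1 ≤ h) {S : Finset (Fin h)} (hS : S.card = d + 1) :
    Asym S ∈ TwoSidedIdeal.span {agen d h} := by
  obtain ⟨g, hg⟩ := exists_perm_image (S := Szero d h) (T := S)
    ((Szero_card hdh).trans hS.symm)
  have hconj := Asym_conj g (Szero d h)
  rw [hg] at hconj
  have hagen : agen d h ∈ TwoSidedIdeal.span {agen d h} :=
    TwoSidedIdeal.subset_span rfl
  have h1 := TwoSidedIdeal.mul_mem_left (TwoSidedIdeal.span {agen d h})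
    (MonoidAlgebra.of ℚ (G h) g) _ hagen
  have h2 := TwoSidedIdeal.mul_mem_right (TwoSidedIdeal.span {agen d h})
    _ (MonoidAlgebra.of ℚ (G h) g⁻¹) h1
  rw [agen_def] at h2
  rwa [hconj] at h2

section Pi3

variable {π : RA h →ₐ[ℚ] Matrix (Fin h → Fin d) (Fin h → Fin d) ℚ}
variable (hπ : ∀ σ : G h, π (MonoidAlgebra.of ℚ (G h) σ) = permMat d h ℚ σ)

include hπ in
lemma Jzero_pi_zero {x : RA h} (hx : x ∈ Jzero d h) : π x = 0 := by
  refine Submodule.span_induction ?_ ?_ ?_ ?_ hx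
  · rintro y ⟨S, τ, hS, rfl⟩
    rw [map_mul, pi_Asym π hπ S hS, zero_mul]
  · exact map_zero π
  · intro a b _ _ ha hb
    rw [map_add, ha, hb, add_zero]
  · intro c a _ ha
    rw [map_smul, ha, smul_zero]

end Pi3

lemma Jzero_le_span (hdh : d + 1 ≤ h) {x : RA h} (hx : x ∈ Jzero d h) :
    x ∈ TwoSidedIdeal.span {agen d h} := by
  refine Submodule.span_induction ?_ ?_ ?_ ?_ hx
  · rintro y ⟨S, τ, hS, rfl⟩
    exact TwoSidedIdeal.mul_mem_right _ _ _ (Asym_mem_span hdh hS)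
  · exact TwoSidedIdeal.zero_mem _
  · intro a b _ _ ha hb
    exact TwoSidedIdeal.add_mem _ ha hb
  · intro c a _ ha
    have : c • a = (c • (1 : RA h)) * a := by
      rw [smul_mul_assoc, one_mul]
    rw [this]
    exact TwoSidedIdeal.mul_mem_left _ _ _ ha

end SFTaux

open SFTaux in
/-- **Second fundamental theorem for tensor space.**  Let `π` be the algebra homomorphism from the
group algebra `ℚ[S_h]` to matrices on the `h`-th tensor power of `ℚ^d` induced by `σ ↦ P_σ`.
Then (a) the kernel of `π` is nonzero iff `h > d`, and (b) if `h > d` the kernel equals the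
two-sided ideal generated by the antisymmetrizer `∑ sgn(σ) • σ` over the copy of `S_{d+1}`
consisting of permutations fixing every index `i ≥ d + 1`. -/
theorem SFT_tensor_space (d h : ℕ) (hd : 1 ≤ d) (hh : 1 ≤ h)
    (π : MonoidAlgebra ℚ (Equiv.Perm (Fin h)) →ₐ[ℚ]
      Matrix (Fin h → Fin d) (Fin h → Fin d) ℚ)
    (hπ : ∀ σ : Equiv.Perm (Fin h),
      π (MonoidAlgebra.of ℚ (Equiv.Perm (Fin h)) σ) = permMat d h ℚ σ) :
    ((∃ x : MonoidAlgebra ℚ (Equiv.Perm (Fin h)), x ≠ 0 ∧ π x = 0) ↔ d < h) ∧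
    (d < h → ∀ x : MonoidAlgebra ℚ (Equiv.Perm (Fin h)),
      π x = 0 ↔ x ∈ TwoSidedIdeal.span
        {∑ σ ∈ Finset.univ.filter
            (fun σ : Equiv.Perm (Fin h) => ∀ i : Fin h, d + 1 ≤ (i : ℕ) → σ i = i),
          ((Equiv.Perm.sign σ : ℤ) : ℚ) • MonoidAlgebra.of ℚ (Equiv.Perm (Fin h)) σ}) := by
  classical
  have hAgen : (∑ σ ∈ Finset.univ.filter
      (fun σ : Equiv.Perm (Fin h) => ∀ i : Fin h, d + 1 ≤ (i : ℕ) → σ i = i),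
        ((Equiv.Perm.sign σ : ℤ) : ℚ) • MonoidAlgebra.of ℚ (Equiv.Perm (Fin h)) σ)
      = agen d h := by
    rw [agen_def, Asym]
    refine Finset.sum_congr ?_ fun σ _ => rfl
    ext ρ
    simp only [Finset.mem_filter, Finset.mem_univ, true_and, filt, Szero]
    constructor
    · intro hρ v hv
      simp only [Finset.mem_filter, Finset.mem_univ, true_and, not_lt] at hv
      exact hρ v hv
    · intro hρ i hi
      refine hρ i ?_
      simp only [Finset.mem_filter, Finset.mem_univ, true_and, not_lt]
      exact hi
  have hbackward : ∀ hdh : d < h, ∀ x : MonoidAlgebra ℚ (Equiv.Perm (Fin h)),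
      x ∈ TwoSidedIdeal.span {agen d h} → π x = 0 := by
    intro hdh x hx
    have hker : agen d h ∈ TwoSidedIdeal.ker π := by
      rw [TwoSidedIdeal.mem_ker, agen_def]
      exact pi_Asym π hπ _ (Szero_card hdh)
    have := TwoSidedIdeal.mem_span_iff.mp hx (TwoSidedIdeal.ker π)
      (fun y hy => by rw [Set.mem_singleton_iff.mp hy]; exact hker)
    exact (TwoSidedIdeal.mem_ker π).mp this
  have hforward : ∀ hdh : d < h, ∀ x : MonoidAlgebra ℚ (Equiv.Perm (Fin h)),
      π x = 0 → x ∈ TwoSidedIdeal.span {agen d h} := by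
    intro hdh x hx
    have hxsup : x ∈ GoodSub d h ⊔ Jzero d h := by
      have h1 := Submodule.sum_mem (GoodSub d h ⊔ Jzero d h)
        (fun σ (_ : σ ∈ (Finset.univ : Finset (Equiv.Perm (Fin h)))) =>
          Submodule.smul_mem _ (x.coeff σ) (of_mem_sup σ))
      rwa [← decomp x] at h1
    obtain ⟨y, hy, z, hz, hyz⟩ := Submodule.mem_sup.mp hxsup
    have hπz : π z = 0 := Jzero_pi_zero hπ hz
    have hπy : π y = 0 := by
      have h2 : y = x - z := by rw [← hyz, add_sub_cancel_right]
      rw [h2, map_sub, hx, hπz, sub_zero]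
    have hy0 : y = 0 := indep hπ hd hy hπy
    have hxz : x = z := by rw [← hyz, hy0, zero_add]
    rw [hxz]
    exact Jzero_le_span hdh hz
  refine ⟨⟨?_, ?_⟩, ?_⟩
  · rintro ⟨x, hxne, hx0⟩
    by_contra hc
    push_neg at hc
    exact hxne (pi_inj hπ hc hx0)
  · intro hdh
    refine ⟨agen d h, agen_ne_zero, ?_⟩
    rw [agen_def]
    exact pi_Asym π hπ _ (Szero_card hdh)
  · intro hdh x
    rw [hAgen]
    exact ⟨hforward hdh x, hbackward hdh x⟩
end

section
/- Partial trace of a transposition composed with a Kronecker product: Let d ≥ 1, n ≥ 1, let R be a commutative ring, let i : Fin n, let τ = Equiv.swap (Fin.castSucc i) (Fin.last n) ∈ Equiv.Perm (Fin (n+1)), and let X : Fin (n+1) → Matrix (Fin d) (Fin d) R. Then ptr (P_τ * K X) = K X', where X' : Fin n → Matrix (Fin d) (Fin d) R is given by X' j = X (Fin.last n) * X (Fin.castSucc i) if j = i, and X' j = X (Fin.castSucc j) otherwise. -/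
/-- The partial trace over the last tensor factor:
`ptr(M) f g = ∑_a M (Fin.snoc f a) (Fin.snoc g a)`. -/
def ptr (d n : ℕ) (R : Type*) [CommRing R]
    (M : Matrix (Fin (n + 1) → Fin d) (Fin (n + 1) → Fin d) R) :
    Matrix (Fin n → Fin d) (Fin n → Fin d) R :=
  Matrix.of fun f g => ∑ a : Fin d, M (Fin.snoc f a) (Fin.snoc g a)

/-- **Partial trace of a transposition composed with a Kronecker product.**  For the transposition
`τ = (i, n)` of the last index with index `i`, the partial trace of `P_τ * K X` is the Kronecker
product of the family obtained by replacing `X i` with `X n * X i` and dropping the last factor. -/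
theorem ptr_swap_kron (d n : ℕ) (hd : 1 ≤ d) (hn : 1 ≤ n)
    (R : Type*) [CommRing R] (i : Fin n)
    (X : Fin (n + 1) → Matrix (Fin d) (Fin d) R) :
    ptr d n R
      (permMat d (n + 1) R (Equiv.swap (Fin.castSucc i) (Fin.last n)) * kron d (n + 1) R X) =
    kron d n R (fun j =>
      if j = i then X (Fin.last n) * X (Fin.castSucc i) else X (Fin.castSucc j)) := by
  ext f g
  simp only [ptr, permMat, kron, Matrix.of_apply, Matrix.mul_apply, ite_mul, one_mul, zero_mul,
    Finset.sum_ite_eq', Finset.mem_univ, if_true]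
  set C : R := ∏ j ∈ Finset.univ.erase i, X (Fin.castSucc j) (f j) (g j) with hC
  have hR : (∏ j, (if j = i then X (Fin.last n) * X (Fin.castSucc i) else X (Fin.castSucc j))
      (f j) (g j)) = (X (Fin.last n) * X (Fin.castSucc i)) (f i) (g i) * C := by
    rw [← Finset.mul_prod_erase Finset.univ _ (Finset.mem_univ i), if_pos rfl]
    congr 1
    exact Finset.prod_congr rfl fun j hj => by rw [if_neg (Finset.ne_of_mem_erase hj)]
  rw [hR]
  have hL : ∀ a : Fin d,
      (∏ k : Fin (n+1),
        X k ((Fin.snoc f a : Fin (n+1) → Fin d) (Equiv.swap (Fin.castSucc i) (Fin.last n) k)) ((Fin.snoc g a : Fin (n+1) → Fin d) k))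
      = X (Fin.castSucc i) a (g i) * C * X (Fin.last n) (f i) a := by
    intro a
    rw [Fin.prod_univ_castSucc]
    have hlast : X (Fin.last n)
        ((Fin.snoc f a : Fin (n+1) → Fin d) (Equiv.swap (Fin.castSucc i) (Fin.last n) (Fin.last n)))
        ((Fin.snoc g a : Fin (n+1) → Fin d) (Fin.last n)) = X (Fin.last n) (f i) a := by
      rw [Equiv.swap_apply_right, Fin.snoc_castSucc, Fin.snoc_last]
    rw [hlast]
    congr 1
    have : (∏ j : Fin n,
        X (Fin.castSucc j)
          ((Fin.snoc f a : Fin (n+1) → Fin d) (Equiv.swap (Fin.castSucc i) (Fin.last n) (Fin.castSucc j)))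
          ((Fin.snoc g a : Fin (n+1) → Fin d) (Fin.castSucc j)))
        = ∏ j : Fin n, (if j = i then X (Fin.castSucc i) a (g i)
            else X (Fin.castSucc j) (f j) (g j)) := by
      refine Finset.prod_congr rfl fun j _ => ?_
      by_cases hji : j = i
      · subst hji
        rw [if_pos rfl, Equiv.swap_apply_left, Fin.snoc_last, Fin.snoc_castSucc]
      · rw [if_neg hji, Equiv.swap_apply_of_ne_of_ne
          (by simpa [Fin.castSucc_inj] using hji) (Fin.castSucc_lt_last j).ne,
          Fin.snoc_castSucc, Fin.snoc_castSucc]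
    rw [this, ← Finset.mul_prod_erase Finset.univ _ (Finset.mem_univ i), if_pos rfl]
    congr 1
    exact Finset.prod_congr rfl fun j hj => by rw [if_neg (Finset.ne_of_mem_erase hj)]
  simp only [Function.comp] at *
  simp only [hL, Matrix.mul_apply, Finset.sum_mul]
  exact Finset.sum_congr rfl fun a _ => by ring
end

section
/- Partial trace of a permutation fixing the last index: Let d ≥ 1, n ≥ 1, let R be a commutative ring, let σ' ∈ Equiv.Perm (Fin n) and let σ ∈ Equiv.Perm (Fin (n+1)) be its extension fixing the last element (σ (Fin.castSucc j) = Fin.castSucc (σ' j) and σ (Fin.last n) = Fin.last n). Then for every X : Fin (n+1) → Matrix (Fin d) (Fin d) R, ptr (P_σ * K X) = Matrix.trace (X (Fin.last n)) • (P_{σ'} * K (fun j : Fin n => X (Fin.castSucc j))). -/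
/-- **Partial trace of a permutation fixing the last index.**  If `σ ∈ S_{n+1}` is the extension
of `σ' ∈ S_n` fixing the last element, then
`ptr (P_σ * K X) = trace (X (last n)) • (P_{σ'} * K (X ∘ castSucc))`. -/
theorem ptr_perm_fixing_last (d n : ℕ) (hd : 1 ≤ d) (hn : 1 ≤ n)
    (R : Type*) [CommRing R] (σ' : Equiv.Perm (Fin n)) (σ : Equiv.Perm (Fin (n + 1)))
    (hσ : ∀ j : Fin n, σ (Fin.castSucc j) = Fin.castSucc (σ' j))
    (hlast : σ (Fin.last n) = Fin.last n)
    (X : Fin (n + 1) → Matrix (Fin d) (Fin d) R) :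
    ptr d n R (permMat d (n + 1) R σ * kron d (n + 1) R X) =
      Matrix.trace (X (Fin.last n)) •
        (permMat d n R σ' * kron d n R (fun j : Fin n => X (Fin.castSucc j))) := by
  ext f g
  simp only [ptr, permMat, kron, Matrix.mul_apply, Matrix.smul_apply, Matrix.of_apply,
    ite_mul, one_mul, zero_mul, Finset.sum_ite_eq' Finset.univ, Finset.mem_univ, if_true,
    smul_eq_mul]
  rw [Matrix.trace, Finset.sum_mul]
  refine Finset.sum_congr rfl fun a _ => ?_
  rw [Fin.prod_univ_castSucc, mul_comm]
  congr 1
  · simp [hlast]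
  · refine Finset.prod_congr rfl fun j _ => ?_
    simp [Function.comp, hσ j, hlast]
end

section
/- The tensor Cayley–Hamilton identities 𝔠_{k,d}(x) = 0: Let F be a field of characteristic zero, let d ≥ 1, let 0 ≤ k ≤ d and set n := d + 1 − k. Then for every matrix x : Matrix (Fin d) (Fin d) F, (∑_{τ ∈ Perm (Fin n)} sgn(τ) • P_τ) * (∑_{j=0}^{k} (−1)^j σ_j(x) • 𝔗_{k−j,n}(x)) = 0 in Matrix (Fin n → Fin d) (Fin n → Fin d) F, where σ_0(x) = 1. (For k = 0 this is the vanishing of the antisymmetrizer on d+1 tensor factors; for k = d, n = 1, it is the Cayley–Hamilton theorem.) -/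
open PowerSeries Polynomial Matrix

/-! ### Auxiliary machinery: generating-function / Jacobi-minor argument -/

noncomputable section TensorCHAux
variable {F : Type*} [Field F] {d : ℕ} (x : Matrix (Fin d) (Fin d) F)

/-- The geometric-series matrix `(1 - zx)⁻¹ = ∑ zⁱ xⁱ` over `F⟦z⟧`. -/
def Ymat : Matrix (Fin d) (Fin d) (PowerSeries F) :=
  Matrix.of fun a b => PowerSeries.mk fun i => (x ^ i) a b

/-- The matrix `1 - z x` over `F⟦z⟧`. -/
def Amat : Matrix (Fin d) (Fin d) (PowerSeries F) :=
  1 - (PowerSeries.X : PowerSeries F) • x.map (PowerSeries.C)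

lemma Amat_apply (a b : Fin d) :
    Amat x a b = (if a = b then 1 else 0) - PowerSeries.X * PowerSeries.C (x a b) := by
  simp [Amat, Matrix.one_apply, Matrix.sub_apply]

lemma Amat_mul_Ymat : Amat x * Ymat x = 1 := by
  ext a b i
  rw [Matrix.mul_apply]
  simp only [Amat_apply, Ymat, Matrix.of_apply, sub_mul, ite_mul, one_mul, zero_mul]
  rw [map_sum]
  simp only [map_sub]
  rw [Finset.sum_sub_distrib]
  simp only [apply_ite (PowerSeries.coeff i), map_zero]
  rw [Finset.sum_ite_eq (Finset.univ) a]
  simp only [Finset.mem_univ, if_true]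
  cases i with
  | zero =>
    simp [PowerSeries.coeff_zero_eq_constantCoeff, Matrix.one_apply]
  | succ i =>
    simp only [PowerSeries.coeff_mk, mul_assoc]
    rw [Finset.sum_congr rfl (fun c _ => PowerSeries.coeff_succ_X_mul i _)]
    simp only [PowerSeries.coeff_C_mul, PowerSeries.coeff_mk]
    have : ∑ c, x a c * (x ^ i) c b = (x ^ (i+1)) a b := by
      rw [pow_succ']; rw [Matrix.mul_apply]
    rw [this, sub_self]
    have : ((1 : Matrix (Fin d) (Fin d) (PowerSeries F)) a b) = if a = b then 1 else 0 :=
      Matrix.one_apply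
    rw [this]
    split <;> simp

lemma coeff_det_Amat (j : ℕ) (hj : j ≤ d) :
    PowerSeries.coeff j (det (Amat x)) = x.charpoly.coeff (d - j) := by
  have h1 : Amat x = (Polynomial.coeToPowerSeries.ringHom (R := F)).mapMatrix
      (1 - (Polynomial.X : F[X]) • x.map Polynomial.C) := by
    ext a b
    simp only [Amat, Matrix.sub_apply, Matrix.smul_apply, Matrix.map_apply, Matrix.one_apply,
      RingHom.mapMatrix_apply, smul_eq_mul, map_sub, _root_.map_mul,
      Polynomial.coeToPowerSeries.ringHom_apply, Polynomial.coe_X, Polynomial.coe_C]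
    split <;> simp
  rw [h1, ← RingHom.map_det]
  have h2 : ((1 - (Polynomial.X : F[X]) • x.map Polynomial.C).det) = x.charpolyRev := rfl
  rw [h2, Polynomial.coeToPowerSeries.ringHom_apply, Polynomial.coeff_coe,
    ← Matrix.reverse_charpoly, Polynomial.coeff_reverse, Matrix.charpoly_natDegree_eq_dim]
  rw [Polynomial.revAt_le (by simpa using hj)]
  simp

lemma coeff_prod_Y {n : ℕ} (i : ℕ) (f' g : Fin n → Fin d) :
    PowerSeries.coeff i (∏ t, Ymat x (f' t) (g t)) =
      ∑ h ∈ Finset.Nat.antidiagonalTuple n i, ∏ t, (x ^ h t) (f' t) (g t) := by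
  rw [PowerSeries.coeff_prod]
  simp only [Ymat, Matrix.of_apply, PowerSeries.coeff_mk]
  refine Finset.sum_nbij' (fun l => (l : Fin n → ℕ)) (fun h => Finsupp.equivFunOnFinite.symm h)
    ?_ ?_ ?_ ?_ ?_
  · intro l hl
    rw [Finset.mem_finsuppAntidiag] at hl
    rw [Finset.Nat.mem_antidiagonalTuple]
    simpa using hl.1
  · intro h hh
    rw [Finset.Nat.mem_antidiagonalTuple] at hh
    rw [Finset.mem_finsuppAntidiag]
    constructor
    · simpa using hh
    · exact Finset.subset_univ _
  · intro l _; simp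
  · intro h _; ext t; simp [Finsupp.equivFunOnFinite]; rfl
  · intro l _; rfl

lemma exists_ext {n m : ℕ} (hm : n + m = d) {u : Fin n → Fin d} (hu : Function.Injective u) :
    ∃ ρ : (Fin n ⊕ Fin m) ≃ Fin d, ∀ s, ρ (Sum.inl s) = u s := by
  classical
  have hc : Fintype.card (Fin m) = Fintype.card ((Set.range u)ᶜ : Set (Fin d)) := by
    rw [Fintype.card_compl_set, Set.card_range_of_injective hu]
    simp only [Fintype.card_fin]
    omega
  refine ⟨(Equiv.sumCongr (Equiv.ofInjective u hu) (Fintype.equivOfCardEq hc)).trans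
    (Equiv.Set.sumCompl (Set.range u)), fun s => by simp⟩

lemma natDegree_entry_Amat (a b : Fin d) :
    ∃ p : Polynomial F, (Amat x a b = (p : PowerSeries F)) ∧ p.natDegree ≤ 1 := by
  refine ⟨(if a = b then 1 else 0) - Polynomial.X * Polynomial.C (x a b), ?_, ?_⟩
  · simp only [Amat, Matrix.sub_apply, Matrix.smul_apply, Matrix.map_apply, Matrix.one_apply,
      smul_eq_mul]
    rw [Polynomial.coe_sub, Polynomial.coe_mul, Polynomial.coe_X, Polynomial.coe_C]
    congr 1
    split <;> simp
  · refine (Polynomial.natDegree_sub_le _ _).trans ?_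
    simp only [Nat.max_le]
    constructor
    · split <;> simp
    · refine (Polynomial.natDegree_mul_le).trans ?_
      simp

lemma jacobi_vanish {n : ℕ} (k : ℕ) (hk : k ≤ d) (hnk : n + k = d + 1)
    (f g : Fin n → Fin d) :
    PowerSeries.coeff k (det (Amat x) * det ((Ymat x).submatrix f g)) = 0 := by
  classical
  by_cases hf : Function.Injective f
  swap
  · obtain ⟨a, b, hab, hne⟩ : ∃ a b, f a = f b ∧ a ≠ b := by
      simpa [Function.Injective, not_forall] using hf
    rw [Matrix.det_zero_of_row_eq hne (by ext j; simp [Matrix.submatrix_apply, hab]),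
      mul_zero, map_zero]
  by_cases hg : Function.Injective g
  swap
  · obtain ⟨a, b, hab, hne⟩ : ∃ a b, g a = g b ∧ a ≠ b := by
      simpa [Function.Injective, not_forall] using hg
    rw [Matrix.det_zero_of_column_eq hne (fun i => by simp [Matrix.submatrix_apply, hab]),
      mul_zero, map_zero]
  have hnd : n ≤ d := by
    have := Fintype.card_le_of_injective f hf
    simpa using this
  have hm : n + (d - n) = d := by omega
  set m := d - n with hmdef
  obtain ⟨ρf, hρf⟩ := exists_ext hm hf
  obtain ⟨ρg, hρg⟩ := exists_ext hm hg
  set B : Matrix (Fin n ⊕ Fin m) (Fin n ⊕ Fin m) (PowerSeries F) :=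
    (Amat x).submatrix ρg ρf with hBdef
  set Binv : Matrix (Fin n ⊕ Fin m) (Fin n ⊕ Fin m) (PowerSeries F) :=
    (Ymat x).submatrix ρf ρg with hBinvdef
  have hB : B * Binv = 1 := by
    rw [hBdef, hBinvdef, Matrix.submatrix_mul_equiv, Amat_mul_Ymat, Matrix.submatrix_one_equiv]
  -- block bookkeeping
  have hblock : B * (fromBlocks Binv.toBlocks₁₁ 0 Binv.toBlocks₂₁ 1) =
      fromBlocks 1 B.toBlocks₁₂ 0 B.toBlocks₂₂ := by
    have h1 := hB
    rw [← Matrix.fromBlocks_toBlocks B, ← Matrix.fromBlocks_toBlocks Binv,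
      Matrix.fromBlocks_multiply, ← Matrix.fromBlocks_one] at h1
    have h11 : B.toBlocks₁₁ * Binv.toBlocks₁₁ + B.toBlocks₁₂ * Binv.toBlocks₂₁ = 1 :=
      congrArg Matrix.toBlocks₁₁ h1
    have h21 : B.toBlocks₂₁ * Binv.toBlocks₁₁ + B.toBlocks₂₂ * Binv.toBlocks₂₁ = 0 :=
      congrArg Matrix.toBlocks₂₁ h1
    nth_rewrite 1 [← Matrix.fromBlocks_toBlocks B]
    rw [Matrix.fromBlocks_multiply]
    rw [Matrix.mul_zero, Matrix.mul_zero, Matrix.mul_one, Matrix.mul_one, zero_add, zero_add,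
      h11, h21]
  have hdets : det B * det Binv.toBlocks₁₁ = det B.toBlocks₂₂ := by
    have := congrArg Matrix.det hblock
    rw [Matrix.det_mul, Matrix.det_fromBlocks_zero₁₂, Matrix.det_fromBlocks_zero₂₁,
      Matrix.det_one, Matrix.det_one, mul_one, one_mul] at this
    exact this
  have hP : Binv.toBlocks₁₁ = (Ymat x).submatrix f g := by
    ext s t
    simp [Matrix.toBlocks₁₁, hBinvdef, Matrix.submatrix_apply, hρf, hρg]
  -- det B = sign π * det (Amat x)
  set π : Equiv.Perm (Fin n ⊕ Fin m) := ρg.trans ρf.symm with hπdef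
  have hBperm : B = ((Amat x).submatrix ρf ρf).submatrix π id := by
    ext i j
    simp [hBdef, Matrix.submatrix_apply, hπdef]
  have hdetB : det B = (Equiv.Perm.sign π : ℤ) * det (Amat x) := by
    rw [hBperm, Matrix.det_permute, Matrix.det_submatrix_equiv_self]
  -- final coefficient computation
  have hfinal : det (Amat x) * det ((Ymat x).submatrix f g) =
      ((Equiv.Perm.sign π : ℤ) : PowerSeries F) * det B.toBlocks₂₂ := by
    rw [← hdets, ← hP, hdetB]
    rcases Int.units_eq_one_or (Equiv.Perm.sign π) with h | h <;> rw [h] <;> push_cast <;> ring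
  -- B.toBlocks₂₂ is a polynomial matrix of entry-degrees ≤ 1 and size m = k - 1
  have hcoeff : PowerSeries.coeff k (det B.toBlocks₂₂) = 0 := by
    choose p hp hdeg using fun a b => natDegree_entry_Amat x a b
    have hB22 : B.toBlocks₂₂ = fun i j =>
        ((p (ρg (Sum.inr i)) (ρf (Sum.inr j)) : Polynomial F) : PowerSeries F) := by
      ext i j
      simp [Matrix.toBlocks₂₂, hBdef, Matrix.submatrix_apply, hp]
    have h0 : (fun i j => ((p (ρg (Sum.inr i)) (ρf (Sum.inr j)) : Polynomial F) : PowerSeries F))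
        = (Polynomial.coeToPowerSeries.ringHom (R := F)).mapMatrix
          (Matrix.of fun i j => p (ρg (Sum.inr i)) (ρf (Sum.inr j))) := by
      ext i j
      simp [Polynomial.coeToPowerSeries.ringHom_apply]
    rw [hB22, h0, ← RingHom.map_det, Polynomial.coeToPowerSeries.ringHom_apply,
      Polynomial.coeff_coe]
    rw [Matrix.det_apply]
    rw [Polynomial.finset_sum_coeff]
    refine Finset.sum_eq_zero fun σ _ => ?_
    rw [Polynomial.coeff_smul]
    simp only [Matrix.of_apply]
    have : (∏ i, p (ρg (Sum.inr (σ i))) (ρf (Sum.inr i))).natDegree < k := by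
      refine lt_of_le_of_lt (Polynomial.natDegree_prod_le _ _) ?_
      refine lt_of_le_of_lt (Finset.sum_le_card_nsmul _ _ 1 fun i _ => hdeg _ _) ?_
      simp only [Finset.card_univ, Fintype.card_fin, smul_eq_mul, mul_one]
      omega
    rw [Polynomial.coeff_eq_zero_of_natDegree_lt this, smul_zero]
  rw [hfinal]
  rcases Int.units_eq_one_or (Equiv.Perm.sign π) with h | h <;> rw [h] <;> push_cast <;>
    simp [hcoeff]

end TensorCHAux

/-- `σ_j(x) := (-1)^j` times the coefficient of `t^(d-j)` in the characteristic polynomial of `x`,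
so that `det (t•1 - x) = t^d + ∑_{j=1}^d (-1)^j σ_j(x) t^(d-j)` and `σ_0(x) = 1`. -/
noncomputable def sigmaCoeff (d : ℕ) {F : Type*} [Field F]
    (x : Matrix (Fin d) (Fin d) F) (j : ℕ) : F :=
  (-1) ^ j * (Matrix.charpoly x).coeff (d - j)

/-- `𝔗_{i,n}(x)`: the sum over all `h : Fin n → ℕ` with `∑ j, h j = i` of the Kronecker
products `x^(h 0) ⊗ ⋯ ⊗ x^(h (n-1))`. -/
noncomputable def frakT (d n : ℕ) {F : Type*} [Field F]
    (x : Matrix (Fin d) (Fin d) F) (i : ℕ) :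
    Matrix (Fin n → Fin d) (Fin n → Fin d) F :=
  ∑ h ∈ Finset.Nat.antidiagonalTuple n i, kron d n F (fun j => x ^ h j)

/-- **The tensor Cayley–Hamilton identities `𝔠_{k,d}(x) = 0`.**  For `0 ≤ k ≤ d` and
`n = d + 1 - k`, the product of the antisymmetrizer `∑_τ sgn(τ) • P_τ` on `n` tensor factors with
`∑_{j=0}^k (-1)^j σ_j(x) • 𝔗_{k-j,n}(x)` vanishes for every `d × d` matrix `x`. -/
theorem tensor_cayley_hamilton (F : Type*) [Field F] [CharZero F]
    (d k : ℕ) (hd : 1 ≤ d) (hk : k ≤ d) (x : Matrix (Fin d) (Fin d) F) :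
    (∑ τ : Equiv.Perm (Fin (d + 1 - k)),
        ((Equiv.Perm.sign τ : ℤ) : F) • permMat d (d + 1 - k) F τ) *
      (∑ j ∈ Finset.range (k + 1),
        ((-1 : F) ^ j * sigmaCoeff d x j) • frakT d (d + 1 - k) x (k - j)) = 0 := by
  set n := d + 1 - k with hn
  have hnk : n + k = d + 1 := by omega
  ext f g
  rw [Matrix.zero_apply]
  have hstep1 :
      ((∑ τ : Equiv.Perm (Fin n), ((Equiv.Perm.sign τ : ℤ) : F) • permMat d n F τ) *
        (∑ j ∈ Finset.range (k + 1),
          ((-1 : F) ^ j * sigmaCoeff d x j) • frakT d n x (k - j))) f g =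
      ∑ τ : Equiv.Perm (Fin n), ((Equiv.Perm.sign τ : ℤ) : F) *
        ∑ j ∈ Finset.range (k + 1), x.charpoly.coeff (d - j) *
          ∑ h ∈ Finset.Nat.antidiagonalTuple n (k - j), ∏ t, (x ^ h t) (f (τ t)) (g t) := by
    rw [Matrix.sum_mul, Matrix.sum_apply]
    refine Finset.sum_congr rfl fun τ _ => ?_
    rw [Matrix.smul_mul, Matrix.smul_apply, smul_eq_mul]
    congr 1
    rw [Matrix.mul_apply]
    simp only [permMat, Matrix.of_apply, ite_mul, one_mul, zero_mul]
    rw [Finset.sum_ite_eq' Finset.univ (f ∘ τ)]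
    simp only [Finset.mem_univ, if_true]
    rw [Matrix.sum_apply]
    refine Finset.sum_congr rfl fun j _ => ?_
    rw [Matrix.smul_apply, smul_eq_mul, sigmaCoeff, ← mul_assoc, ← mul_pow]
    simp only [neg_mul_neg, one_mul, one_pow]
    simp [frakT, kron, Matrix.sum_apply]
  rw [hstep1]
  have hstep2 :
      PowerSeries.coeff k (det (Amat x) * det ((Ymat x).submatrix f g)) =
      ∑ j ∈ Finset.range (k + 1), x.charpoly.coeff (d - j) *
        ∑ τ : Equiv.Perm (Fin n), ((Equiv.Perm.sign τ : ℤ) : F) *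
          ∑ h ∈ Finset.Nat.antidiagonalTuple n (k - j), ∏ t, (x ^ h t) (f (τ t)) (g t) := by
    rw [PowerSeries.coeff_mul, Finset.Nat.sum_antidiagonal_eq_sum_range_succ_mk]
    refine Finset.sum_congr rfl fun j hj => ?_
    have hj' : j ≤ d := le_trans (Nat.lt_succ_iff.mp (Finset.mem_range.mp hj)) hk
    rw [coeff_det_Amat x j hj']
    congr 1
    rw [Matrix.det_apply']
    rw [map_sum]
    refine Finset.sum_congr rfl fun τ _ => ?_
    have hz : (((Equiv.Perm.sign τ : ℤ) : PowerSeries F) *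
          ∏ i, (Ymat x).submatrix f g (τ i) i) =
        ((Equiv.Perm.sign τ : ℤ) • ∏ i, (Ymat x).submatrix f g (τ i) i) := by
      rw [zsmul_eq_mul]
    rw [hz, map_zsmul]
    rw [zsmul_eq_mul]
    push_cast
    congr 1
    simp only [Matrix.submatrix_apply]
    exact coeff_prod_Y x (k - j) (fun t => f (τ t)) g
  have hswap :
      ∑ τ : Equiv.Perm (Fin n), ((Equiv.Perm.sign τ : ℤ) : F) *
        ∑ j ∈ Finset.range (k + 1), x.charpoly.coeff (d - j) *
          ∑ h ∈ Finset.Nat.antidiagonalTuple n (k - j), ∏ t, (x ^ h t) (f (τ t)) (g t) =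
      ∑ j ∈ Finset.range (k + 1), x.charpoly.coeff (d - j) *
        ∑ τ : Equiv.Perm (Fin n), ((Equiv.Perm.sign τ : ℤ) : F) *
          ∑ h ∈ Finset.Nat.antidiagonalTuple n (k - j), ∏ t, (x ^ h t) (f (τ t)) (g t) := by
    simp only [Finset.mul_sum]
    rw [Finset.sum_comm]
    refine Finset.sum_congr rfl fun j _ => Finset.sum_congr rfl fun τ _ =>
      Finset.sum_congr rfl fun h _ => by ring
  rw [hswap, ← hstep2]
  exact jacobi_vanish x k hk hnk f g
end

section
/- The identity 𝔠_{1,3}(x) = 0 for 3×3 matrices: Let F be a field of characteristic zero and x : Matrix (Fin 3) (Fin 3) F. Then (∑_{τ ∈ Perm (Fin 3)} sgn(τ) • P_τ) * (K(![x, 1, 1]) + K(![1, x, 1]) + K(![1, 1, x]) − Matrix.trace x • 1) = 0 in Matrix (Fin 3 → Fin 3) (Fin 3 → Fin 3) F, where 1 denotes the identity matrix of the appropriate size and K(![x,1,1]) = x ⊗ 1 ⊗ 1, etc. -/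
open Matrix

/-- Entry formula for `(∑ τ, sgn τ • P_τ) * B`. -/
lemma perm_sum_mul_apply {d m : ℕ} {R : Type*} [CommRing R]
    (B : Matrix (Fin m → Fin d) (Fin m → Fin d) R) (f g : Fin m → Fin d) :
    ((∑ τ : Equiv.Perm (Fin m), ((Equiv.Perm.sign τ : ℤ) : R) • permMat d m R τ) * B) f g
      = ∑ τ : Equiv.Perm (Fin m), ((Equiv.Perm.sign τ : ℤ) : R) * B (f ∘ τ) g := by
  rw [Matrix.sum_mul]
  rw [Matrix.sum_apply]
  refine Finset.sum_congr rfl fun τ _ => ?_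
  rw [Matrix.smul_mul, Matrix.smul_apply, smul_eq_mul]
  congr 1
  rw [Matrix.mul_apply]
  simp [permMat, ite_mul]

/-- `tr(adj(PQᵀ) ⬝ (P x Qᵀ)) = det (PQᵀ) * tr x`. -/
lemma key_trace {n R : Type*} [Fintype n] [DecidableEq n] [CommRing R]
    (P Q x : Matrix n n R) :
    Matrix.trace (Matrix.adjugate (P * Qᵀ) * (P * x * Qᵀ))
      = Matrix.det (P * Qᵀ) * Matrix.trace x := by
  rw [Matrix.adjugate_mul_distrib]
  have h1 : Matrix.adjugate Qᵀ * Matrix.adjugate P * (P * x * Qᵀ)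
      = (Matrix.adjugate Qᵀ * (Matrix.adjugate P * P * x)) * Qᵀ := by
    simp only [Matrix.mul_assoc]
  rw [h1, Matrix.trace_mul_comm, ← Matrix.mul_assoc, Matrix.mul_adjugate, Matrix.adjugate_mul]
  simp [Matrix.smul_mul, Matrix.trace_smul, Matrix.det_mul, Matrix.det_transpose, smul_eq_mul]
  ring

/-- **The identity `𝔠_{1,3}(x) = 0` for `3 × 3` matrices:**
`(∑_τ sgn(τ) • P_τ) * (x ⊗ 1 ⊗ 1 + 1 ⊗ x ⊗ 1 + 1 ⊗ 1 ⊗ x - tr(x)·1) = 0`. -/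
theorem c_one_three (F : Type*) [Field F] [CharZero F] (x : Matrix (Fin 3) (Fin 3) F) :
    (∑ τ : Equiv.Perm (Fin 3), ((Equiv.Perm.sign τ : ℤ) : F) • permMat 3 3 F τ) *
      (kron 3 3 F ![x, 1, 1] + kron 3 3 F ![1, x, 1] + kron 3 3 F ![1, 1, x]
        - Matrix.trace x • 1) = 0 := by
  classical
  ext f g
  rw [Matrix.zero_apply, perm_sum_mul_apply]
  set Pf : Matrix (Fin 3) (Fin 3) F := Matrix.of fun i a => if f i = a then 1 else 0 with hPf
  set Pg : Matrix (Fin 3) (Fin 3) F := Matrix.of fun i a => if g i = a then 1 else 0 with hPg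
  set Δ : Matrix (Fin 3) (Fin 3) F := Pf * Pgᵀ with hΔ
  set X : Matrix (Fin 3) (Fin 3) F := Pf * x * Pgᵀ with hX
  have hΔ' : ∀ a j, Δ a j = if f a = g j then 1 else 0 := by
    intro a j
    simp [hΔ, hPf, hPg, Matrix.mul_apply, ite_and, Matrix.transpose_apply]
  have hX' : ∀ a j, X a j = x (f a) (g j) := by
    intro a j
    simp [hX, hPf, hPg, Matrix.mul_apply, Matrix.transpose_apply, ite_mul, mul_ite]
  have key : ∀ τ : Equiv.Perm (Fin 3),
      (kron 3 3 F ![x, 1, 1] + kron 3 3 F ![1, x, 1] + kron 3 3 F ![1, 1, x]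
        - Matrix.trace x • 1) (f ∘ τ) g
      = (∏ i, (Δ.updateCol 0 fun a => X a 0) (τ i) i)
        + (∏ i, (Δ.updateCol 1 fun a => X a 1) (τ i) i)
        + (∏ i, (Δ.updateCol 2 fun a => X a 2) (τ i) i)
        - Matrix.trace x * ∏ i, Δ (τ i) i := by
    intro τ
    have hone : ((1 : Matrix (Fin 3 → Fin 3) (Fin 3 → Fin 3) F) (f ∘ τ) g)
        = ∏ i, Δ (τ i) i := by
      simp only [hΔ', Matrix.one_apply]
      rw [Finset.prod_boole]
      simp [funext_iff]
    simp only [Matrix.sub_apply, Matrix.add_apply, Matrix.smul_apply, smul_eq_mul, hone, kron,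
      Matrix.of_apply, Function.comp_apply]
    congr 1
    rw [Fin.prod_univ_three, Fin.prod_univ_three, Fin.prod_univ_three, Fin.prod_univ_three,
      Fin.prod_univ_three, Fin.prod_univ_three]
    simp [Matrix.updateCol_apply, hΔ', hX', Matrix.one_apply]
  simp_rw [key, mul_sub, mul_add, Finset.sum_sub_distrib, Finset.sum_add_distrib]
  have hdet : ∀ M : Matrix (Fin 3) (Fin 3) F,
      ∑ τ : Equiv.Perm (Fin 3), ((Equiv.Perm.sign τ : ℤ) : F) * ∏ i, M (τ i) i = M.det := by
    intro M
    rw [Matrix.det_apply]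
    exact Finset.sum_congr rfl fun τ _ => by rw [Units.smul_def, zsmul_eq_mul]
  have htr : ∑ τ : Equiv.Perm (Fin 3),
      ((Equiv.Perm.sign τ : ℤ) : F) * (Matrix.trace x * ∏ i, Δ (τ i) i)
      = Matrix.trace x * Δ.det := by
    rw [← hdet Δ, Finset.mul_sum]
    exact Finset.sum_congr rfl fun τ _ => by ring
  rw [hdet, hdet, hdet, htr]
  have hcol : ∀ k : Fin 3, (Δ.updateCol k fun a => X a k).det
      = (Matrix.adjugate Δ * X) k k := by
    intro k
    rw [← Matrix.cramer_apply, Matrix.cramer_eq_adjugate_mulVec]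
    simp [Matrix.mulVec, Matrix.mul_apply, dotProduct]
  rw [hcol 0, hcol 1, hcol 2]
  have : (Matrix.adjugate Δ * X) 0 0 + (Matrix.adjugate Δ * X) 1 1
      + (Matrix.adjugate Δ * X) 2 2 = Matrix.trace (Matrix.adjugate Δ * X) := by
    simp [Matrix.trace, Fin.sum_univ_three]
  rw [this, hΔ, hX, key_trace, ← hΔ]
  ring
end

section
/- Trace expression for characteristic polynomial coefficients: Let F be a field of characteristic zero, d ≥ 1, 0 ≤ r ≤ d, and x : Matrix (Fin d) (Fin d) F. Then (r! : F) * ((−1)^r * (Matrix.charpoly x).coeff (d − r)) = ∑_{σ ∈ Perm (Fin r)} sgn(σ) * Matrix.trace (P_{σ⁻¹} * K (fun _ : Fin r => x)); that is, r! · σ_r(x) equals the signed sum over the symmetric group S_r of the trace functions t_σ(x,…,x). -/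
open Matrix Finset Polynomial


lemma det_piecewise_single {d : ℕ} {A : Type*} [CommRing A]
    (N : Matrix (Fin d) (Fin d) A) (s : Finset (Fin d)) :
    Matrix.det (Matrix.of (s.piecewise (fun i => Pi.single i 1) (fun i => N i))) =
      Matrix.det (N.submatrix (fun i : {a : Fin d // a ∉ s} => (i : Fin d))
        (fun i : {a : Fin d // a ∉ s} => (i : Fin d))) := by
  classical
  set P : Matrix (Fin d) (Fin d) A :=
    Matrix.of (s.piecewise (fun i => Pi.single i 1) (fun i => N i))
  let e : {a : Fin d // a ∈ s} ⊕ {a : Fin d // ¬ a ∈ s} ≃ Fin d := Equiv.sumCompl (· ∈ s)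
  rw [← Matrix.det_submatrix_equiv_self e P]
  have : P.submatrix e e = Matrix.fromBlocks
      (1 : Matrix {a : Fin d // a ∈ s} {a : Fin d // a ∈ s} A)
      (0 : Matrix {a : Fin d // a ∈ s} {a : Fin d // a ∉ s} A)
      (N.submatrix (fun i : {a : Fin d // a ∉ s} => (i : Fin d))
        (fun j : {a : Fin d // a ∈ s} => (j : Fin d)))
      (N.submatrix (fun i : {a : Fin d // a ∉ s} => (i : Fin d))
        (fun j : {a : Fin d // a ∉ s} => (j : Fin d))) := by
    ext i j
    cases i with
    | inl i =>
      cases j with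
      | inl j =>
        simp only [P, e, Equiv.sumCompl_apply_inl, Matrix.submatrix_apply, Matrix.of_apply,
          Finset.piecewise_eq_of_mem _ _ _ i.2, Pi.single_apply, Matrix.fromBlocks_apply₁₁,
          Matrix.one_apply, Subtype.ext_iff, eq_comm]
      | inr j =>
        have : (j : Fin d) ≠ (i : Fin d) := fun h => j.2 (h ▸ i.2)
        simp [P, e, Finset.piecewise_eq_of_mem _ _ _ i.2, Pi.single_apply, this]
    | inr i =>
      cases j with
      | inl j => simp [P, e, Finset.piecewise_eq_of_notMem _ _ _ i.2]
      | inr j => simp [P, e, Finset.piecewise_eq_of_notMem _ _ _ i.2]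
  rw [this, Matrix.det_fromBlocks_zero₁₂, Matrix.det_one, one_mul]

lemma det_sub_congr {d : ℕ} {A : Type*} [CommRing A] (N : Matrix (Fin d) (Fin d) A)
    {p q : Fin d → Prop} [DecidablePred p] [DecidablePred q] (h : ∀ a, p a ↔ q a) :
    Matrix.det (N.submatrix (fun i : {a // p a} => (i : Fin d)) (fun i : {a // p a} => (i : Fin d))) =
    Matrix.det (N.submatrix (fun i : {a // q a} => (i : Fin d)) (fun i : {a // q a} => (i : Fin d))) := by
  rw [← Matrix.det_submatrix_equiv_self (Equiv.subtypeEquivRight h)]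
  rfl

lemma charpoly_expand {d : ℕ} {F : Type*} [Field F] (M : Matrix (Fin d) (Fin d) F) :
    M.charpoly = ∑ s : Finset (Fin d), (Polynomial.X : F[X])^s.card *
      Polynomial.C ((-1:F)^(d - s.card) *
        (M.submatrix (fun i : {a : Fin d // a ∉ s} => (i : Fin d)) (fun i : {a : Fin d // a ∉ s} => (i : Fin d))).det) := by
  classical
  set u : Fin d → Fin d → F[X] := fun i => (Polynomial.X : F[X]) • (Pi.single i 1 : Fin d → F[X]) with hu
  set v : Fin d → Fin d → F[X] := fun i j => -Polynomial.C (M i j) with hv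
  have hmat : Matrix.charpoly M = Matrix.det (Matrix.of (u + v)) := by
    unfold Matrix.charpoly
    congr 1
    ext i j
    by_cases h : i = j
    · subst h
      simp [charmatrix_apply_eq, u, v, Pi.single_apply, sub_eq_add_neg]
    · simp [charmatrix_apply_ne _ _ _ h, u, v, Pi.single_apply, Ne.symm h]
  rw [hmat]
  have hdet : Matrix.det (Matrix.of (u + v)) =
      ∑ s : Finset (Fin d), Matrix.detRowAlternating (s.piecewise u v) :=
    (Matrix.detRowAlternating (R := F[X]) (n := Fin d)).toMultilinearMap.map_add_univ u v
  rw [hdet]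
  refine Finset.sum_congr rfl fun s _ => ?_
  set m : Fin d → Fin d → F[X] := s.piecewise (fun i => Pi.single i 1) v with hm
  have hpw : s.piecewise u v = s.piecewise (fun i => (Polynomial.X : F[X]) • m i) m := by
    funext i
    by_cases h : i ∈ s
    · rw [Finset.piecewise_eq_of_mem _ _ _ h, Finset.piecewise_eq_of_mem _ _ _ h, hm,
        Finset.piecewise_eq_of_mem _ _ _ h]
    · rw [Finset.piecewise_eq_of_notMem _ _ _ h, Finset.piecewise_eq_of_notMem _ _ _ h, hm,
        Finset.piecewise_eq_of_notMem _ _ _ h]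
  rw [hpw]
  have hsmul := (Matrix.detRowAlternating (R := F[X]) (n := Fin d)).toMultilinearMap.map_piecewise_smul
    (fun _ => (Polynomial.X : F[X])) m s
  rw [show Matrix.detRowAlternating (s.piecewise (fun i => (Polynomial.X : F[X]) • m i) m) =
      (∏ _i ∈ s, (Polynomial.X : F[X])) • Matrix.detRowAlternating m from hsmul,
    Finset.prod_const]
  have hfm : Matrix.detRowAlternating m =
      Polynomial.C ((-1:F)^(d - s.card) *
        (M.submatrix (fun i : {a : Fin d // a ∉ s} => (i : Fin d)) (fun i : {a : Fin d // a ∉ s} => (i : Fin d))).det) := by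
    have h1 : Matrix.detRowAlternating m =
        Matrix.det (Matrix.of (s.piecewise (fun i => Pi.single i 1)
          (fun i => (-(M.map Polynomial.C)) i))) := rfl
    rw [h1, det_piecewise_single]
    have h2 : (-(M.map Polynomial.C)).submatrix
          (fun i : {a : Fin d // a ∉ s} => (i : Fin d)) (fun i : {a : Fin d // a ∉ s} => (i : Fin d)) =
        -((M.submatrix (fun i : {a : Fin d // a ∉ s} => (i : Fin d))
            (fun i : {a : Fin d // a ∉ s} => (i : Fin d))).map Polynomial.C) := by
      ext i j; simp
    have hcard : Fintype.card {a : Fin d // a ∉ s} = d - s.card := by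
      simp [Fintype.card_subtype_compl]
    rw [h2, Matrix.det_neg, hcard, ← RingHom.mapMatrix_apply, ← RingHom.map_det]
    simp
  rw [hfm]
  rw [smul_eq_mul]

set_option maxHeartbeats 1000000 in
lemma charpoly_coeff_minors {d r : ℕ} {F : Type*} [Field F] (hr : r ≤ d)
    (M : Matrix (Fin d) (Fin d) F) :
    M.charpoly.coeff (d - r) = (-1:F)^r *
      ∑ t ∈ Finset.powersetCard r (Finset.univ : Finset (Fin d)),
        (M.submatrix (fun i : {a : Fin d // a ∈ t} => (i : Fin d))
          (fun i : {a : Fin d // a ∈ t} => (i : Fin d))).det := by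
  rw [charpoly_expand, Polynomial.finset_sum_coeff]
  have h1 : ∀ s : Finset (Fin d),
      ((Polynomial.X : F[X])^s.card * Polynomial.C ((-1:F)^(d - s.card) *
        (M.submatrix (fun i : {a : Fin d // a ∉ s} => (i : Fin d))
          (fun i : {a : Fin d // a ∉ s} => (i : Fin d))).det)).coeff (d - r) =
      if s.card = d - r then (-1:F)^(d - s.card) *
        (M.submatrix (fun i : {a : Fin d // a ∉ s} => (i : Fin d))
          (fun i : {a : Fin d // a ∉ s} => (i : Fin d))).det else 0 := by
    intro s
    rw [mul_comm, Polynomial.coeff_C_mul, Polynomial.coeff_X_pow]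
    by_cases h : d - r = s.card
    · simp [h]
    · rw [if_neg h, if_neg (fun hh => h hh.symm), mul_zero]
  simp_rw [h1]
  rw [← Finset.sum_filter]
  have h2 : Finset.univ.filter (fun s : Finset (Fin d) => s.card = d - r) =
      Finset.powersetCard (d - r) (Finset.univ : Finset (Fin d)) := by
    ext s; simp [Finset.mem_powersetCard_univ]
  rw [h2, Finset.mul_sum]
  refine Finset.sum_bij' (fun s _ => sᶜ) (fun t _ => tᶜ) ?_ ?_ ?_ ?_ ?_
  · intro s hs
    rw [Finset.mem_powersetCard_univ] at hs ⊢
    rw [Finset.card_compl, hs, Fintype.card_fin, Nat.sub_sub_self hr]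
  · intro t ht
    rw [Finset.mem_powersetCard_univ] at ht ⊢
    rw [Finset.card_compl, ht, Fintype.card_fin]
  · intro s _; exact compl_compl s
  · intro t _; exact compl_compl t
  · intro s hs
    rw [Finset.mem_powersetCard_univ] at hs
    have hcg := det_sub_congr (p := fun a => a ∉ s) (q := fun a => a ∈ sᶜ) M
      (fun a => (Finset.mem_compl).symm)
    rw [hs, Nat.sub_sub_self hr, hcg]
    congr!


section
variable {d r : ℕ} {F : Type*} [Field F]

lemma card_image_univ (f : Fin r → Fin d) (hf : Function.Injective f) :
    (Finset.image f Finset.univ).card = r := by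
  rw [Finset.card_image_of_injective _ hf, Finset.card_univ, Fintype.card_fin]

/-- The permutation relating an injective function to the monotone enumeration of its image. -/
noncomputable def permOf (f : Fin r → Fin d) (hf : Function.Injective f) :
    Equiv.Perm (Fin r) :=
  Equiv.ofBijective
    (fun k => ((Finset.image f Finset.univ).orderIsoOfFin (card_image_univ f hf)).symm
      ⟨f k, Finset.mem_image_of_mem f (Finset.mem_univ k)⟩)
    (Finite.injective_iff_bijective.mp (fun a b hab => by
      apply hf
      have := congrArg (fun z => (((Finset.image f Finset.univ).orderIsoOfFin
        (card_image_univ f hf)) z : Fin d)) hab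
      simpa using this))

lemma permOf_spec (f : Fin r → Fin d) (hf : Function.Injective f) (k : Fin r) :
    (Finset.image f Finset.univ).orderEmbOfFin (card_image_univ f hf) (permOf f hf k) = f k := by
  rw [← Finset.coe_orderIsoOfFin_apply]
  simp [permOf, Equiv.ofBijective]

lemma sum_det_submatrix (hr : r ≤ d) (x : Matrix (Fin d) (Fin d) F) :
    ∑ f : Fin r → Fin d, (x.submatrix f f).det =
    (r.factorial : F) * ∑ t ∈ Finset.powersetCard r (Finset.univ : Finset (Fin d)),
      (x.submatrix (fun i : {a : Fin d // a ∈ t} => (i : Fin d))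
        (fun i : {a : Fin d // a ∈ t} => (i : Fin d))).det := by
  classical
  -- restrict to injective functions
  rw [← Finset.sum_filter_add_sum_filter_not Finset.univ (fun f : Fin r → Fin d =>
    Function.Injective f)]
  have hzero : ∑ f ∈ Finset.univ.filter (fun f : Fin r → Fin d => ¬ Function.Injective f),
      (x.submatrix f f).det = 0 := by
    refine Finset.sum_eq_zero fun f hf => ?_
    rw [Finset.mem_filter] at hf
    obtain ⟨a, b, hab, hne⟩ := Function.not_injective_iff.mp hf.2
    exact Matrix.det_zero_of_row_eq hne (by ext j; simp [Matrix.submatrix_apply, hab])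
  rw [hzero, add_zero]
  -- reindex by pairs (permutation, subset)
  have key : ∑ f ∈ Finset.univ.filter (fun f : Fin r → Fin d => Function.Injective f),
      (x.submatrix f f).det =
      ∑ p : Equiv.Perm (Fin r) × {t : Finset (Fin d) // t ∈ Finset.powersetCard r Finset.univ},
        (x.submatrix (fun i : {a : Fin d // a ∈ (p.2 : Finset (Fin d))} => (i : Fin d))
          (fun i : {a : Fin d // a ∈ (p.2 : Finset (Fin d))} => (i : Fin d))).det := by
    refine Finset.sum_bij'
      (fun f hf => (permOf f (Finset.mem_filter.mp hf).2,
        ⟨Finset.image f Finset.univ, Finset.mem_powersetCard_univ.mpr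
          (card_image_univ f (Finset.mem_filter.mp hf).2)⟩))
      (fun p _ => fun k => (p.2 : Finset (Fin d)).orderEmbOfFin
        (Finset.mem_powersetCard_univ.mp p.2.2) (p.1 k))
      (fun f hf => Finset.mem_univ _)
      (fun p hp => ?_) (fun f hf => ?_) (fun p hp => ?_) (fun f hf => ?_)
    · refine Finset.mem_filter.mpr ⟨Finset.mem_univ _, ?_⟩
      exact (((p.2 : Finset (Fin d)).orderEmbOfFin
        (Finset.mem_powersetCard_univ.mp p.2.2)).injective).comp p.1.injective
    · funext k
      exact permOf_spec f (Finset.mem_filter.mp hf).2 k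
    · -- right inverse
      obtain ⟨σ, t, ht⟩ := p
      set emb := (t : Finset (Fin d)).orderEmbOfFin (Finset.mem_powersetCard_univ.mp ht)
        with hembdef
      have hinj : Function.Injective (fun k => emb (σ k)) :=
        emb.injective.comp σ.injective
      have htt : Finset.image (fun k => emb (σ k)) Finset.univ = (t : Finset (Fin d)) := by
        apply Finset.eq_of_subset_of_card_le
        · intro a ha
          obtain ⟨k, _, rfl⟩ := Finset.mem_image.mp ha
          exact Finset.orderEmbOfFin_mem _ _ _
        · rw [Finset.mem_powersetCard_univ.mp ht, card_image_univ _ hinj]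
      have hemb2 : ⇑emb = (Finset.image (fun k => emb (σ k)) Finset.univ).orderEmbOfFin
          (card_image_univ _ hinj) := by
        refine Finset.orderEmbOfFin_unique _ (fun x => ?_) emb.strictMono
        rw [htt]; exact Finset.orderEmbOfFin_mem _ _ _
      refine Prod.ext ?_ (Subtype.ext htt)
      · -- permutation components agree
        apply Equiv.ext
        intro k
        show (permOf (fun k => emb (σ k)) hinj) k = σ k
        have h3 := permOf_spec (fun k => emb (σ k)) hinj k
        rw [← hemb2] at h3
        exact emb.injective h3
    · -- determinant values agree
      have hf' := (Finset.mem_filter.mp hf).2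
      set t := Finset.image f Finset.univ with htdef
      have hcard : t.card = r := card_image_univ f hf'
      have hfeq : f = fun k => t.orderEmbOfFin hcard (permOf f hf' k) := by
        funext k; exact (permOf_spec f hf' k).symm
      have h1 : x.submatrix f f =
          (x.submatrix (t.orderEmbOfFin hcard) (t.orderEmbOfFin hcard)).submatrix
            (permOf f hf') (permOf f hf') := by
        conv_lhs => rw [hfeq]
        rfl
      have h2 : x.submatrix (⇑(t.orderEmbOfFin hcard)) (⇑(t.orderEmbOfFin hcard)) =
          (x.submatrix (fun i : {a : Fin d // a ∈ t} => (i : Fin d))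
            (fun i : {a : Fin d // a ∈ t} => (i : Fin d))).submatrix
            ⇑(t.orderIsoOfFin hcard).toEquiv ⇑(t.orderIsoOfFin hcard).toEquiv := by
        ext i j
        simp [Matrix.submatrix_apply]
      rw [h1, Matrix.det_submatrix_equiv_self, h2,
        Matrix.det_submatrix_equiv_self ((t.orderIsoOfFin hcard).toEquiv)]
  rw [key, Fintype.sum_prod_type]
  have hconst : ∀ σ : Equiv.Perm (Fin r),
      ∑ b : {t : Finset (Fin d) // t ∈ Finset.powersetCard r Finset.univ},
        (x.submatrix (fun i : {a : Fin d // a ∈ (b : Finset (Fin d))} => (i : Fin d))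
          (fun i : {a : Fin d // a ∈ (b : Finset (Fin d))} => (i : Fin d))).det =
      ∑ t ∈ Finset.powersetCard r (Finset.univ : Finset (Fin d)),
        (x.submatrix (fun i : {a : Fin d // a ∈ t} => (i : Fin d))
          (fun i : {a : Fin d // a ∈ t} => (i : Fin d))).det := by
    intro σ
    exact Finset.sum_coe_sort (Finset.powersetCard r Finset.univ)
      (fun t => (x.submatrix (fun i : {a : Fin d // a ∈ t} => (i : Fin d))
        (fun i : {a : Fin d // a ∈ t} => (i : Fin d))).det)
  rw [Fintype.sum_congr _ _ hconst]
  rw [Finset.sum_const, Finset.card_univ, Fintype.card_perm, Fintype.card_fin, nsmul_eq_mul]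

end

lemma signed_trace_sum_eq (d r : ℕ) (F : Type*) [Field F] (x : Matrix (Fin d) (Fin d) F) :
    ∑ σ : Equiv.Perm (Fin r), ((Equiv.Perm.sign σ : ℤ) : F) *
        Matrix.trace (permMat d r F σ⁻¹ * kron d r F (fun _ : Fin r => x)) =
    ∑ f : Fin r → Fin d, (x.submatrix f f).det := by
  have htr : ∀ σ : Equiv.Perm (Fin r),
      Matrix.trace (permMat d r F σ⁻¹ * kron d r F (fun _ => x)) =
      ∑ f : Fin r → Fin d, ∏ i, x (f (σ⁻¹ i)) (f i) := fun σ => by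
    simp [permMat, kron, Matrix.trace, Matrix.diag, Matrix.mul_apply, ite_mul, Function.comp]
  simp_rw [htr, Finset.mul_sum]
  rw [Finset.sum_comm]
  refine Finset.sum_congr rfl fun f _ => ?_
  rw [Matrix.det_apply']
  refine Finset.sum_equiv (Equiv.inv (Equiv.Perm (Fin r))) (by simp) fun σ _ => ?_
  simp only [Equiv.inv_apply, Equiv.Perm.sign_inv, Matrix.submatrix_apply, inv_inv]

/-- **Trace expression for characteristic polynomial coefficients:**
`r! · σ_r(x) = ∑_{σ ∈ S_r} sgn(σ) · trace (P_{σ⁻¹} * K (x,…,x))`, where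
`σ_r(x) = (-1)^r · coeff (d - r)` of the characteristic polynomial of `x`. -/
theorem factorial_sigma_eq_signed_trace_sum (F : Type*) [Field F] [CharZero F]
    (d r : ℕ) (hd : 1 ≤ d) (hr : r ≤ d) (x : Matrix (Fin d) (Fin d) F) :
    (r.factorial : F) * ((-1 : F) ^ r * (Matrix.charpoly x).coeff (d - r)) =
      ∑ σ : Equiv.Perm (Fin r), ((Equiv.Perm.sign σ : ℤ) : F) *
        Matrix.trace (permMat d r F σ⁻¹ * kron d r F (fun _ : Fin r => x)) := by
  rw [signed_trace_sum_eq, sum_det_submatrix hr x, charpoly_coeff_minors hr x]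
  congr 1
  rw [← mul_assoc, ← mul_pow]
  simp
end

section
/- Kernel of the symmetric group action at the critical size h = d + 1: Let d ≥ 1 and let π : MonoidAlgebra ℚ (Equiv.Perm (Fin (d+1))) → Matrix (Fin (d+1) → Fin d) (Fin (d+1) → Fin d) ℚ be the algebra homomorphism induced by σ ↦ P_σ. Then the kernel of π is the one-dimensional ℚ-subspace spanned by the full antisymmetrizer a := ∑_{σ ∈ Perm (Fin (d+1))} sgn(σ) • σ. -/
section aux

variable {d : ℕ}

/-- For each pair `a ≠ b` there is a function `f` identifying exactly `a` and `b`. -/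
lemma exists_good (hd : 1 ≤ d) (a b : Fin (d + 1)) (hab : a ≠ b) :
    ∃ f : Fin (d + 1) → Fin d,
      ∀ k l, f k = f l ↔ (k = l ∨ (k = a ∧ l = b) ∨ (k = b ∧ l = a)) := by
  have h0d : 0 < d := hd
  set f0 : Fin (d + 1) → Fin d := fun k => if h : (k : ℕ) < d then ⟨k, h⟩ else ⟨0, h0d⟩ with hf0
  have hf0prop : ∀ k l : Fin (d + 1), f0 k = f0 l ↔
      (k = l ∨ (k = 0 ∧ l = Fin.last d) ∨ (k = Fin.last d ∧ l = 0)) := by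
    intro k l
    have hk := k.isLt; have hl := l.isLt
    by_cases hk' : (k : ℕ) < d <;> by_cases hl' : (l : ℕ) < d <;>
      simp [f0, hk', hl', Fin.ext_iff, Fin.val_last, -Fin.val_eq_zero_iff] <;> omega
  have hlast0 : (Fin.last d) ≠ (0 : Fin (d + 1)) := by
    simp [Fin.ext_iff]; omega
  obtain ⟨ρ, hρa, hρb⟩ : ∃ ρ : Equiv.Perm (Fin (d + 1)), ρ a = 0 ∧ ρ b = Fin.last d := by
    classical
    set ρ1 := Equiv.swap a 0 with hρ1
    have h1a : ρ1 a = 0 := Equiv.swap_apply_left a 0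
    have hb0 : ρ1 b ≠ 0 := by
      intro h
      exact hab (ρ1.injective (h1a.trans h.symm))
    set ρ2 := Equiv.swap (ρ1 b) (Fin.last d) with hρ2
    refine ⟨ρ1.trans ρ2, ?_, ?_⟩
    · show ρ2 (ρ1 a) = 0
      rw [h1a]
      exact Equiv.swap_apply_of_ne_of_ne (Ne.symm hb0) (Ne.symm hlast0)
    · show ρ2 (ρ1 b) = Fin.last d
      exact Equiv.swap_apply_left _ _
  refine ⟨f0 ∘ ρ, fun k l => ?_⟩
  have hk0 : ∀ k, ρ k = 0 ↔ k = a := by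
    intro k; rw [← hρa]; exact ⟨fun h => ρ.injective h, fun h => by rw [h]⟩
  have hkl : ∀ k, ρ k = Fin.last d ↔ k = b := by
    intro k; rw [← hρb]; exact ⟨fun h => ρ.injective h, fun h => by rw [h]⟩
  simp only [Function.comp_apply, hf0prop, EmbeddingLike.apply_eq_iff_eq, hk0, hkl]

/-- Characterization of when `f ∘ τ = f ∘ σ` for a good `f`. -/
lemma comp_eq_iff (a b : Fin (d + 1)) (hab : a ≠ b) (f : Fin (d + 1) → Fin d)
    (hf : ∀ k l, f k = f l ↔ (k = l ∨ (k = a ∧ l = b) ∨ (k = b ∧ l = a)))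
    (σ τ : Equiv.Perm (Fin (d + 1))) :
    f ∘ τ = f ∘ σ ↔ (τ = σ ∨ τ = Equiv.swap a b * σ) := by
  constructor
  · intro h
    set ρ := τ * σ⁻¹ with hρdef
    have hρk : ∀ k, f (ρ k) = f k := by
      intro k
      have := congrFun h (σ⁻¹ k)
      simpa [ρ, Equiv.Perm.mul_apply] using this
    have hcases : ∀ k, ρ k = k ∨ (ρ k = a ∧ k = b) ∨ (ρ k = b ∧ k = a) :=
      fun k => (hf _ _).mp (hρk k)
    have hρ : ρ = 1 ∨ ρ = Equiv.swap a b := by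
      rcases hcases a with h1 | ⟨h1, h2⟩ | ⟨h1, _⟩
      · left
        refine Equiv.ext fun k => ?_
        rw [Equiv.Perm.one_apply]
        rcases hcases k with hk | ⟨hk1, hk2⟩ | ⟨hk1, hk2⟩
        · exact hk
        · subst hk2
          exact absurd (ρ.injective (hk1.trans h1.symm)) (Ne.symm hab)
        · subst hk2
          exact absurd (h1.symm.trans hk1) hab
      · exact absurd h2 hab
      · right
        refine Equiv.ext fun k => ?_
        rcases hcases k with hk | ⟨hk1, hk2⟩ | ⟨hk1, hk2⟩
        · by_cases hka : k = a
          · subst hka; exact absurd (hk.symm.trans h1) hab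
          · by_cases hkb : k = b
            · subst hkb
              exact absurd (ρ.injective (hk.trans h1.symm)).symm hab
            · rw [Equiv.swap_apply_of_ne_of_ne hka hkb, hk]
        · subst hk2
          rw [Equiv.swap_apply_right, hk1]
        · subst hk2
          rw [Equiv.swap_apply_left, hk1]
    rcases hρ with h' | h'
    · left
      have := mul_inv_eq_one.mp h'
      exact this
    · right
      exact mul_inv_eq_iff_eq_mul.mp h'
  · rintro (rfl | rfl)
    · rfl
    · funext k
      show f ((Equiv.swap a b) (σ k)) = f (σ k)
      generalize σ k = j
      by_cases hja : j = a
      · rw [hja, Equiv.swap_apply_left]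
        exact (hf b a).mpr (Or.inr (Or.inr ⟨rfl, rfl⟩))
      · by_cases hjb : j = b
        · rw [hjb, Equiv.swap_apply_right]
          exact (hf a b).mpr (Or.inr (Or.inl ⟨rfl, rfl⟩))
        · rw [Equiv.swap_apply_of_ne_of_ne hja hjb]

end aux

/-- **Kernel of the symmetric group action at the critical size `h = d + 1`.**  The kernel of the
algebra homomorphism `π : ℚ[S_{d+1}] → End((ℚ^d)^{⊗(d+1)})` induced by `σ ↦ P_σ` is the
one-dimensional subspace spanned by the full antisymmetrizer `∑_σ sgn(σ) • σ`. -/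
theorem kernel_at_critical_size (d : ℕ) (hd : 1 ≤ d)
    (π : MonoidAlgebra ℚ (Equiv.Perm (Fin (d + 1))) →ₐ[ℚ]
      Matrix (Fin (d + 1) → Fin d) (Fin (d + 1) → Fin d) ℚ)
    (hπ : ∀ σ : Equiv.Perm (Fin (d + 1)),
      π (MonoidAlgebra.of ℚ (Equiv.Perm (Fin (d + 1))) σ) = permMat d (d + 1) ℚ σ) :
    {x : MonoidAlgebra ℚ (Equiv.Perm (Fin (d + 1))) | π x = 0} =
      (Submodule.span ℚ
        {∑ σ : Equiv.Perm (Fin (d + 1)), ((Equiv.Perm.sign σ : ℤ) : ℚ) •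
          MonoidAlgebra.of ℚ (Equiv.Perm (Fin (d + 1))) σ} :
        Submodule ℚ (MonoidAlgebra ℚ (Equiv.Perm (Fin (d + 1))))) := by
    classical
  set G := Equiv.Perm (Fin (d + 1))
  set A : MonoidAlgebra ℚ G :=
    ∑ σ : G, ((Equiv.Perm.sign σ : ℤ) : ℚ) • MonoidAlgebra.of ℚ G σ with hA
  -- decomposition of an arbitrary element
  have hdecomp : ∀ x : MonoidAlgebra ℚ G, x = ∑ σ : G, x.coeff σ • MonoidAlgebra.of ℚ G σ := by
    intro x
    ext τ
    rw [MonoidAlgebra.coeff_sum, Finset.sum_apply']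
    simp [MonoidAlgebra.of_apply, MonoidAlgebra.coeff_single, Finsupp.single_apply, Finset.sum_ite_eq]
    rw [Finset.sum_eq_single τ (fun b _ hb => if_neg hb) (by simp)]
    simp
  -- entries of π x
  have hentry : ∀ (x : MonoidAlgebra ℚ G) (f g : Fin (d + 1) → Fin d),
      π x f g = ∑ σ : G, x.coeff σ * (if g = f ∘ σ then 1 else 0) := by
    intro x f g
    conv_lhs => rw [hdecomp x]
    rw [map_sum]
    simp only [map_smul]
    rw [Finset.sum_congr rfl fun σ _ => by rw [hπ σ]]
    rw [Matrix.sum_apply]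
    simp [permMat, Matrix.smul_apply, smul_eq_mul]
  ext x
  simp only [Set.mem_setOf_eq, SetLike.mem_coe]
  constructor
  · intro hx
    have hzero : ∀ f g : Fin (d + 1) → Fin d,
        (∑ σ : G, x.coeff σ * (if g = f ∘ σ then 1 else 0)) = 0 := by
      intro f g
      rw [← hentry x f g, hx]
      rfl
    have hrel : ∀ (a b : Fin (d + 1)), a ≠ b → ∀ σ₀ : G,
        x.coeff (Equiv.swap a b * σ₀) = - x.coeff σ₀ := by
      intro a b hab σ₀
      obtain ⟨f, hf⟩ := exists_good hd a b hab
      have h := hzero f (f ∘ σ₀)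
      have hiff : ∀ σ : G, (f ∘ σ₀ = f ∘ σ) ↔ (σ = σ₀ ∨ σ = Equiv.swap a b * σ₀) := by
        intro σ
        rw [show (f ∘ σ₀ = f ∘ σ) ↔ (f ∘ σ = f ∘ σ₀) from eq_comm]
        exact comp_eq_iff a b hab f hf σ₀ σ
      have hne : σ₀ ≠ Equiv.swap a b * σ₀ := by
        intro h'
        have h2 : (1 : G) = Equiv.swap a b := mul_right_cancel (b := σ₀) (by rw [one_mul, ← h'])
        have h3 := Equiv.ext_iff.mp h2.symm a
        rw [Equiv.swap_apply_left, Equiv.Perm.one_apply] at h3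
        exact hab h3.symm
      have hsummand : ∀ σ : G, x.coeff σ * (if f ∘ σ₀ = f ∘ σ then 1 else 0)
          = (if σ = σ₀ then x.coeff σ else 0) + (if σ = Equiv.swap a b * σ₀ then x.coeff σ else 0) := by
        intro σ
        by_cases h1 : σ = σ₀
        · subst h1
          rw [if_pos ((hiff _).mpr (Or.inl rfl)), if_pos rfl, if_neg hne]
          ring
        · by_cases h2 : σ = Equiv.swap a b * σ₀
          · subst h2
            rw [if_pos ((hiff _).mpr (Or.inr rfl)), if_neg h1, if_pos rfl]
            ring
          · rw [if_neg h1, if_neg h2, if_neg (fun hc => by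
              rcases (hiff σ).mp hc with h | h
              exacts [h1 h, h2 h])]
            ring
      rw [Finset.sum_congr rfl (fun σ _ => hsummand σ), Finset.sum_add_distrib,
        Finset.sum_ite_eq' Finset.univ σ₀ x.coeff,
        Finset.sum_ite_eq' Finset.univ (Equiv.swap a b * σ₀) x.coeff] at h
      simp at h
      linarith
    have hsgn : ∀ σ : G, x.coeff σ = ((Equiv.Perm.sign σ : ℤ) : ℚ) * x.coeff 1 := by
      intro σ
      refine Equiv.Perm.swap_induction_on σ (by simp) ?_
      intro f a b hab ih
      rw [hrel a b hab f, ih]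
      rw [Equiv.Perm.sign_mul, Equiv.Perm.sign_swap hab]
      push_cast
      ring
    rw [Submodule.mem_span_singleton]
    refine ⟨x.coeff 1, ?_⟩
    ext τ
    rw [MonoidAlgebra.coeff_smul_apply, hA, MonoidAlgebra.coeff_sum, Finset.sum_apply']
    simp [MonoidAlgebra.of_apply, MonoidAlgebra.coeff_single, Finsupp.single_apply, Finset.sum_ite_eq,
      Finset.sum_ite_eq']
    rw [Finset.sum_eq_single τ (fun b _ hb => if_neg hb) (by simp), if_pos rfl]
    rw [hsgn τ]
    ring
  · intro hx
    rw [Submodule.mem_span_singleton] at hx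
    obtain ⟨c, rfl⟩ := hx
    rw [map_smul]
    suffices h : π A = 0 by rw [h, smul_zero]
    have : π A = ∑ σ : G, ((Equiv.Perm.sign σ : ℤ) : ℚ) • permMat d (d + 1) ℚ σ := by
      rw [hA, map_sum]
      simp only [map_smul]
      rw [Finset.sum_congr rfl fun σ _ => by rw [hπ σ]]
    rw [this]
    ext f g
    rw [Matrix.sum_apply]
    simp only [Matrix.smul_apply, permMat, Matrix.of_apply, smul_eq_mul]
    obtain ⟨a, b, hab, hfab⟩ := Fintype.exists_ne_map_eq_of_card_lt f (by simp)
    set F : G → ℚ := fun σ => ((Equiv.Perm.sign σ : ℤ) : ℚ) * (if g = f ∘ σ then 1 else 0)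
      with hF
    have hfs : ∀ σ : G, f ∘ (Equiv.swap a b * σ) = f ∘ σ := by
      intro σ
      funext k
      show f ((Equiv.swap a b) (σ k)) = f (σ k)
      generalize σ k = j
      by_cases hja : j = a
      · subst hja; rw [Equiv.swap_apply_left, hfab]
      · by_cases hjb : j = b
        · subst hjb; rw [Equiv.swap_apply_right, hfab]
        · rw [Equiv.swap_apply_of_ne_of_ne hja hjb]
    have hFneg : ∀ σ : G, F (Equiv.swap a b * σ) = - F σ := by
      intro σ
      rw [hF]
      simp only
      rw [hfs σ, Equiv.Perm.sign_mul, Equiv.Perm.sign_swap hab]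
      push_cast
      ring
    have hsum : ∑ σ : G, F (Equiv.swap a b * σ) = ∑ σ : G, F σ := by
      exact Equiv.sum_comp (Equiv.mulLeft (Equiv.swap a b)) F
    rw [Finset.sum_congr rfl (fun σ _ => hFneg σ), Finset.sum_neg_distrib] at hsum
    have : ∑ σ : G, F σ = 0 := by linarith
    simpa [hF] using this
end
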